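/- arXiv:1411.5303 — 4 statements merged into one kernel-verified Lean document; each statement's English description precedes it below -/
import Mathlib

section
/- Let N ≥ 2 and h, φ ∈ C_c^∞(ℝ^N). Then ∫_{ℝ^N} det(D²h) φ dx = −(1/N!) Σ_{σ,τ ∈ S_N} sgn(σ) sgn(τ) ∫_{ℝ^N} (∂_{σ(1)} h)(∂_{τ(1)} h)(∂_{σ(2)}∂_{τ(2)} φ) (∂_{σ(3)}∂_{τ(3)} h) ⋯ (∂_{σ(N)}∂_{τ(N)} h) dx, where S_N is the symmetric group on {1,…,N} and the product over indices 3,…,N is empty when N = 2. -/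
open MeasureTheory Real Filter

noncomputable section

abbrev Eu (N : ℕ) : Type := EuclideanSpace ℝ (Fin N)

def ebasis {N : ℕ} (i : Fin N) : Eu N := EuclideanSpace.single i 1

/-- Partial derivative `∂ᵢ u (x)`. -/
def pd {N : ℕ} (u : Eu N → ℝ) (i : Fin N) (x : Eu N) : ℝ :=
  fderiv ℝ u x (ebasis i)

/-- Second partial derivative `∂ᵢ∂ⱼ u (x)`. -/
def pd2 {N : ℕ} (u : Eu N → ℝ) (i j : Fin N) (x : Eu N) : ℝ :=
  fderiv ℝ (fun y => fderiv ℝ u y (ebasis j)) x (ebasis i)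

/-- The determinant of the Hessian matrix `det (D²u)(x)`. -/
def hessDet {N : ℕ} (u : Eu N → ℝ) (x : Eu N) : ℝ :=
  (Matrix.of fun i j => pd2 u i j x).det

/-- The Besov norm `‖u‖_{s,p}`. -/
def besov (N : ℕ) (s p : ℝ) (u : Eu N → ℝ) : ℝ :=
  (∫ x : Eu N, |u x| ^ p) ^ (1/p)
  + (∫ x : Eu N, ‖fderiv ℝ u x‖ ^ p) ^ (1/p)
  + (∫ x : Eu N, ∫ y : Eu N,
      ‖fderiv ℝ u x - fderiv ℝ u y‖ ^ p / ‖x - y‖ ^ ((N : ℝ) + (s-1)*p)) ^ (1/p)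

variable {N : ℕ}

lemma contDiff_fderiv_apply {u : Eu N → ℝ} (hu : ContDiff ℝ (⊤ : ℕ∞) u) (v : Eu N) :
    ContDiff ℝ (⊤ : ℕ∞) (fun x => fderiv ℝ u x v) :=
  (hu.fderiv_right (by exact_mod_cast le_top)).clm_apply contDiff_const

lemma contDiff_pd {u : Eu N → ℝ} (hu : ContDiff ℝ (⊤ : ℕ∞) u) (i : Fin N) :
    ContDiff ℝ (⊤ : ℕ∞) (pd u i) :=
  contDiff_fderiv_apply hu (ebasis i)

lemma hcs_pd {u : Eu N → ℝ} (hus : HasCompactSupport u) (i : Fin N) :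
    HasCompactSupport (pd u i) :=
  (hus.fderiv ℝ).comp_left (g := fun L : Eu N →L[ℝ] ℝ => L (ebasis i)) rfl

lemma contDiff_pd2 {u : Eu N → ℝ} (hu : ContDiff ℝ (⊤ : ℕ∞) u) (i j : Fin N) :
    ContDiff ℝ (⊤ : ℕ∞) (pd2 u i j) :=
  contDiff_pd (contDiff_pd hu j) i

lemma my_ibp {f g : Eu N → ℝ} (hf : ContDiff ℝ (⊤ : ℕ∞) f) (hfs : HasCompactSupport f)
    (hg : ContDiff ℝ (⊤ : ℕ∞) g) (i : Fin N) :
    ∫ x : Eu N, f x * pd g i x = - ∫ x : Eu N, pd f i x * g x := by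
  have hfc := hf.continuous
  have hgc := hg.continuous
  have hf' := (contDiff_pd hf i).continuous
  have hg' := (contDiff_pd hg i).continuous
  exact integral_mul_fderiv_eq_neg_fderiv_mul_of_integrable
    ((hf'.mul hgc).integrable_of_hasCompactSupport ((hcs_pd hfs i).mul_right))
    ((hfc.mul hg').integrable_of_hasCompactSupport (hfs.mul_right))
    ((hfc.mul hgc).integrable_of_hasCompactSupport (hfs.mul_right))
    (fun x _ => hf.differentiable (by simp) x)
    (fun x _ => hg.differentiable (by simp) x)

lemma pd_mul {f g : Eu N → ℝ} (hf : ContDiff ℝ (⊤ : ℕ∞) f) (hg : ContDiff ℝ (⊤ : ℕ∞) g)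
    (i : Fin N) (x : Eu N) :
    pd (fun y => f y * g y) i x = pd f i x * g x + f x * pd g i x := by
  unfold pd
  rw [fderiv_fun_mul (hf.differentiable (by simp) x)
    (hg.differentiable (by simp) x)]
  simp [smul_eq_mul]
  ring

lemma contDiff_prodF {ι : Type*} [DecidableEq ι] (s : Finset ι) (f : ι → Eu N → ℝ)
    (hf : ∀ j ∈ s, ContDiff ℝ (⊤ : ℕ∞) (f j)) :
    ContDiff ℝ (⊤ : ℕ∞) (fun y => ∏ j ∈ s, f j y) := by
  induction s using Finset.induction with
  | empty => simpa using contDiff_const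
  | @insert a s ha ih =>
    simp only [Finset.prod_insert ha]
    exact (hf a (Finset.mem_insert_self a s)).mul
      (ih fun j hj => hf j (Finset.mem_insert_of_mem hj))

lemma pd_prod {ι : Type*} [DecidableEq ι] (s : Finset ι) (f : ι → Eu N → ℝ)
    (hf : ∀ j ∈ s, ContDiff ℝ (⊤ : ℕ∞) (f j)) (i : Fin N) (x : Eu N) :
    pd (fun y => ∏ j ∈ s, f j y) i x
      = ∑ j ∈ s, pd (f j) i x * ∏ k ∈ s.erase j, f k x := by
  induction s using Finset.induction with
  | empty => simp [pd]
  | @insert a s ha ih =>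
    have hfa := hf a (Finset.mem_insert_self a s)
    have hfs : ∀ j ∈ s, ContDiff ℝ (⊤ : ℕ∞) (f j) :=
      fun j hj => hf j (Finset.mem_insert_of_mem hj)
    simp only [Finset.prod_insert ha]
    rw [pd_mul hfa (contDiff_prodF s f hfs) i x, ih hfs,
      Finset.sum_insert ha, Finset.erase_insert ha, Finset.mul_sum]
    congr 1
    apply Finset.sum_congr rfl
    intro j hj
    rw [Finset.erase_insert_of_ne (by rintro rfl; exact ha hj),
      Finset.prod_insert (fun hmem => ha (Finset.mem_of_mem_erase hmem))]
    ring

lemma pd2_eq_fderiv2 {u : Eu N → ℝ} (hu : ContDiff ℝ (⊤ : ℕ∞) u) (i j : Fin N) (x : Eu N) :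
    pd2 u i j x = fderiv ℝ (fderiv ℝ u) x (ebasis i) (ebasis j) := by
  have hd : DifferentiableAt ℝ (fderiv ℝ u) x :=
    ((hu.fderiv_right (m := (⊤ : ℕ∞)) (by exact_mod_cast le_top)).differentiable
      (by simp)) x
  have : (fun y => fderiv ℝ u y (ebasis j))
      = fun y => (fderiv ℝ u y : Eu N →L[ℝ] ℝ) ((fun _ => ebasis j) y) := rfl
  unfold pd2
  rw [this, fderiv_clm_apply hd (differentiableAt_const _)]
  simp

lemma pd2_symm {u : Eu N → ℝ} (hu : ContDiff ℝ (⊤ : ℕ∞) u) (i j : Fin N) (x : Eu N) :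
    pd2 u i j x = pd2 u j i x := by
  rw [pd2_eq_fderiv2 hu, pd2_eq_fderiv2 hu]
  exact hu.contDiffAt.isSymmSndFDerivAt (by simp; exact WithTop.coe_le_coe.mpr (le_top : ((2 : ℕ) : ℕ∞) ≤ ⊤)) _ _

lemma pd_pd_eq {u : Eu N → ℝ} (hu : ContDiff ℝ (⊤ : ℕ∞) u) (a b : Fin N) :
    pd (pd u a) b = pd (pd u b) a :=
  funext fun x => pd2_symm hu b a x

lemma pd2_pd_comm {u : Eu N → ℝ} (hu : ContDiff ℝ (⊤ : ℕ∞) u) (a b c : Fin N) (x : Eu N) :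
    pd2 (pd u a) b c x = pd2 (pd u b) a c x := by
  have e1 : pd (pd u a) c = pd (pd u c) a := pd_pd_eq hu a c
  have e2 : pd (pd u c) b = pd (pd u b) c := pd_pd_eq hu c b
  calc pd2 (pd u a) b c x = pd (pd (pd u a) c) b x := rfl
  _ = pd (pd (pd u c) a) b x := by rw [e1]
  _ = pd2 (pd u c) b a x := rfl
  _ = pd2 (pd u c) a b x := pd2_symm (contDiff_pd hu c) b a x
  _ = pd (pd (pd u c) b) a x := rfl
  _ = pd (pd (pd u b) c) a x := by rw [e2]
  _ = pd2 (pd u b) a c x := rfl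

/-- third derivative: swap the outer derivative with the first index. -/
lemma D3_swap13 {u : Eu N → ℝ} (hu : ContDiff ℝ (⊤ : ℕ∞) u) (a b c : Fin N) (x : Eu N) :
    pd (pd2 u a b) c x = pd (pd2 u c b) a x := by
  show pd2 (pd u b) c a x = pd2 (pd u b) a c x
  exact pd2_symm (contDiff_pd hu b) c a x

/-- third derivative: swap the outer derivative with the second index. -/
lemma D3_swap23 {u : Eu N → ℝ} (hu : ContDiff ℝ (⊤ : ℕ∞) u) (a b c : Fin N) (x : Eu N) :
    pd (pd2 u a b) c x = pd (pd2 u a c) b x := by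
  show pd2 (pd u b) c a x = pd2 (pd u c) b a x
  exact pd2_pd_comm hu b c a x

lemma step2_pt (N : ℕ) (hN : 2 ≤ N) (h φ : Eu N → ℝ)
    (hh : ContDiff ℝ (⊤ : ℕ∞) h) (hφ : ContDiff ℝ (⊤ : ℕ∞) φ) (hφs : HasCompactSupport φ)
    (σ τ : Equiv.Perm (Fin N)) :
    (∫ x : Eu N, φ x * ∏ i, pd2 h (σ i) (τ i) x)
    = -((∫ x : Eu N, pd φ (σ ⟨0, Nat.zero_lt_of_lt (a := nat_lit 1) hN⟩) x * pd h (τ ⟨0, Nat.zero_lt_of_lt (a := nat_lit 1) hN⟩) x *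
          ∏ i ∈ Finset.filter (fun i : Fin N => 1 ≤ (i : ℕ)) Finset.univ,
            pd2 h (σ i) (τ i) x)
      + ∑ j ∈ Finset.filter (fun i : Fin N => 1 ≤ (i : ℕ)) Finset.univ,
          ∫ x : Eu N, φ x * pd h (τ ⟨0, Nat.zero_lt_of_lt (a := nat_lit 1) hN⟩) x * pd (pd2 h (σ j) (τ j)) (σ ⟨0, Nat.zero_lt_of_lt (a := nat_lit 1) hN⟩) x *
            ∏ i ∈ (Finset.filter (fun i : Fin N => 1 ≤ (i : ℕ)) Finset.univ).erase j,
              pd2 h (σ i) (τ i) x) := by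
  set i0 : Fin N := ⟨0, Nat.zero_lt_of_lt (a := nat_lit 1) hN⟩ with hi0def
  set T : Finset (Fin N) := Finset.filter (fun i : Fin N => 1 ≤ (i : ℕ)) Finset.univ with hTdef
  have hTe : Finset.univ.erase i0 = T := by
    ext i
    simp [hTdef, hi0def, Fin.ext_iff]
    omega
  have hcdP : ContDiff ℝ (⊤ : ℕ∞) (fun x => ∏ i ∈ T, pd2 h (σ i) (τ i) x) :=
    contDiff_prodF T _ (fun j _ => contDiff_pd2 hh (σ j) (τ j))
  have hF : ContDiff ℝ (⊤ : ℕ∞) (fun x => φ x * ∏ i ∈ T, pd2 h (σ i) (τ i) x) := hφ.mul hcdP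
  have hFs : HasCompactSupport (fun x => φ x * ∏ i ∈ T, pd2 h (σ i) (τ i) x) := hφs.mul_right
  have e0 : ∀ x : Eu N, φ x * ∏ i, pd2 h (σ i) (τ i) x
      = (φ x * ∏ i ∈ T, pd2 h (σ i) (τ i) x) * pd (pd h (τ i0)) (σ i0) x := by
    intro x
    rw [← Finset.mul_prod_erase Finset.univ _ (Finset.mem_univ i0), hTe]
    show φ x * (pd2 h (σ i0) (τ i0) x * _) = _ * pd2 h (σ i0) (τ i0) x
    ring
  simp only [e0]
  rw [my_ibp hF hFs (contDiff_pd hh (τ i0)) (σ i0), neg_inj]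
  have hrep : ∀ x : Eu N,
      pd (fun y => φ y * ∏ i ∈ T, pd2 h (σ i) (τ i) y) (σ i0) x * pd h (τ i0) x
      = pd φ (σ i0) x * pd h (τ i0) x * ∏ i ∈ T, pd2 h (σ i) (τ i) x
        + ∑ j ∈ T, (φ x * pd h (τ i0) x * pd (pd2 h (σ j) (τ j)) (σ i0) x *
            ∏ i ∈ T.erase j, pd2 h (σ i) (τ i) x) := by
    intro x
    rw [pd_mul hφ hcdP (σ i0) x,
      pd_prod T (fun i => pd2 h (σ i) (τ i)) (fun j _ => contDiff_pd2 hh (σ j) (τ j)) (σ i0) x,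
      add_mul, Finset.mul_sum, Finset.sum_mul]
    congr 1
    · ring
    · exact Finset.sum_congr rfl fun j hj => by ring
  simp only [hrep]
  rw [integral_add, integral_finset_sum]
  · intro j hj
    apply Continuous.integrable_of_hasCompactSupport
    · exact ((((hφ.continuous.mul (contDiff_pd hh (τ i0)).continuous)).mul
        (contDiff_pd (contDiff_pd2 hh (σ j) (τ j)) (σ i0)).continuous).mul
        (contDiff_prodF (T.erase j) _
          (fun k _ => contDiff_pd2 hh (σ k) (τ k))).continuous)
    · exact ((hφs.mul_right).mul_right).mul_right
  · apply Continuous.integrable_of_hasCompactSupport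
    · exact (((contDiff_pd hφ (σ i0)).continuous.mul
        (contDiff_pd hh (τ i0)).continuous).mul hcdP.continuous)
    · exact ((hcs_pd hφs (σ i0)).mul_right).mul_right
  · apply integrable_finset_sum
    intro j hj
    apply Continuous.integrable_of_hasCompactSupport
    · exact ((((hφ.continuous.mul (contDiff_pd hh (τ i0)).continuous)).mul
        (contDiff_pd (contDiff_pd2 hh (σ j) (τ j)) (σ i0)).continuous).mul
        (contDiff_prodF (T.erase j) _
          (fun k _ => contDiff_pd2 hh (σ k) (τ k))).continuous)
    · exact ((hφs.mul_right).mul_right).mul_right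

lemma step3_pt (N : ℕ) (hN : 2 ≤ N) (h φ : Eu N → ℝ)
    (hh : ContDiff ℝ (⊤ : ℕ∞) h) (hφ : ContDiff ℝ (⊤ : ℕ∞) φ) (hφs : HasCompactSupport φ)
    (σ τ : Equiv.Perm (Fin N)) :
    (∫ x : Eu N, pd φ (σ ⟨0, Nat.zero_lt_of_lt (a := nat_lit 1) hN⟩) x * pd h (τ ⟨0, Nat.zero_lt_of_lt (a := nat_lit 1) hN⟩) x *
        ∏ i ∈ Finset.filter (fun i : Fin N => 1 ≤ (i : ℕ)) Finset.univ, pd2 h (σ i) (τ i) x)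
    = -((∫ x : Eu N, pd2 φ (τ ⟨1, hN⟩) (σ ⟨0, Nat.zero_lt_of_lt (a := nat_lit 1) hN⟩) x * pd h (τ ⟨0, Nat.zero_lt_of_lt (a := nat_lit 1) hN⟩) x *
          pd h (σ ⟨1, hN⟩) x *
          ∏ i ∈ Finset.filter (fun i : Fin N => 2 ≤ (i : ℕ)) Finset.univ, pd2 h (σ i) (τ i) x)
      + (∫ x : Eu N, pd φ (σ ⟨0, Nat.zero_lt_of_lt (a := nat_lit 1) hN⟩) x * pd2 h (τ ⟨1, hN⟩) (τ ⟨0, Nat.zero_lt_of_lt (a := nat_lit 1) hN⟩) x *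
          pd h (σ ⟨1, hN⟩) x *
          ∏ i ∈ Finset.filter (fun i : Fin N => 2 ≤ (i : ℕ)) Finset.univ, pd2 h (σ i) (τ i) x)
      + ∑ j ∈ Finset.filter (fun i : Fin N => 2 ≤ (i : ℕ)) Finset.univ,
          ∫ x : Eu N, pd φ (σ ⟨0, Nat.zero_lt_of_lt (a := nat_lit 1) hN⟩) x * pd h (τ ⟨0, Nat.zero_lt_of_lt (a := nat_lit 1) hN⟩) x *
            pd (pd2 h (σ j) (τ j)) (τ ⟨1, hN⟩) x * pd h (σ ⟨1, hN⟩) x *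
            ∏ i ∈ (Finset.filter (fun i : Fin N => 2 ≤ (i : ℕ)) Finset.univ).erase j,
              pd2 h (σ i) (τ i) x) := by
  set i0 : Fin N := ⟨0, Nat.zero_lt_of_lt (a := nat_lit 1) hN⟩ with hi0def
  set i1 : Fin N := ⟨1, hN⟩ with hi1def
  set T : Finset (Fin N) := Finset.filter (fun i : Fin N => 1 ≤ (i : ℕ)) Finset.univ with hTdef
  set K : Finset (Fin N) := Finset.filter (fun i : Fin N => 2 ≤ (i : ℕ)) Finset.univ with hKdef
  have hi1T : i1 ∈ T := by simp [hTdef, hi1def]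
  have hKe : T.erase i1 = K := by
    ext i
    simp [hTdef, hKdef, hi1def, Fin.ext_iff]
    omega
  have hcdP : ContDiff ℝ (⊤ : ℕ∞) (fun x => ∏ i ∈ K, pd2 h (σ i) (τ i) x) :=
    contDiff_prodF K _ (fun j _ => contDiff_pd2 hh (σ j) (τ j))
  have hq : ContDiff ℝ (⊤ : ℕ∞) (fun y => pd φ (σ i0) y * pd h (τ i0) y) :=
    (contDiff_pd hφ (σ i0)).mul (contDiff_pd hh (τ i0))
  have hF : ContDiff ℝ (⊤ : ℕ∞)
      (fun x => pd φ (σ i0) x * pd h (τ i0) x * ∏ i ∈ K, pd2 h (σ i) (τ i) x) := hq.mul hcdP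
  have hFs : HasCompactSupport
      (fun x => pd φ (σ i0) x * pd h (τ i0) x * ∏ i ∈ K, pd2 h (σ i) (τ i) x) :=
    ((hcs_pd hφs (σ i0)).mul_right).mul_right
  have e0 : ∀ x : Eu N, pd φ (σ i0) x * pd h (τ i0) x * ∏ i ∈ T, pd2 h (σ i) (τ i) x
      = (pd φ (σ i0) x * pd h (τ i0) x * ∏ i ∈ K, pd2 h (σ i) (τ i) x) *
          pd (pd h (σ i1)) (τ i1) x := by
    intro x
    rw [← Finset.mul_prod_erase T _ hi1T, hKe, pd2_symm hh (σ i1) (τ i1) x]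
    show _ * (pd2 h (τ i1) (σ i1) x * _) = _ * pd2 h (τ i1) (σ i1) x
    ring
  simp only [e0]
  rw [my_ibp hF hFs (contDiff_pd hh (σ i1)) (τ i1), neg_inj]
  have hrep : ∀ x : Eu N,
      pd (fun y => pd φ (σ i0) y * pd h (τ i0) y * ∏ i ∈ K, pd2 h (σ i) (τ i) y) (τ i1) x *
        pd h (σ i1) x
      = (pd2 φ (τ i1) (σ i0) x * pd h (τ i0) x * pd h (σ i1) x *
            ∏ i ∈ K, pd2 h (σ i) (τ i) x
        + pd φ (σ i0) x * pd2 h (τ i1) (τ i0) x * pd h (σ i1) x *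
            ∏ i ∈ K, pd2 h (σ i) (τ i) x)
        + ∑ j ∈ K, (pd φ (σ i0) x * pd h (τ i0) x * pd (pd2 h (σ j) (τ j)) (τ i1) x *
            pd h (σ i1) x * ∏ i ∈ K.erase j, pd2 h (σ i) (τ i) x) := by
    intro x
    rw [pd_mul hq hcdP (τ i1) x, pd_mul (contDiff_pd hφ (σ i0)) (contDiff_pd hh (τ i0)) (τ i1) x,
      pd_prod K (fun i => pd2 h (σ i) (τ i)) (fun j _ => contDiff_pd2 hh (σ j) (τ j)) (τ i1) x,
      add_mul, Finset.mul_sum, Finset.sum_mul]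
    congr 1
    · show (pd2 φ (τ i1) (σ i0) x * pd h (τ i0) x + pd φ (σ i0) x * pd2 h (τ i1) (τ i0) x) *
        (∏ i ∈ K, pd2 h (σ i) (τ i) x) * pd h (σ i1) x = _
      ring
    · exact Finset.sum_congr rfl fun j hj => by ring
  simp only [hrep]
  have int1 : Integrable (fun x : Eu N => pd2 φ (τ i1) (σ i0) x * pd h (τ i0) x *
      pd h (σ i1) x * ∏ i ∈ K, pd2 h (σ i) (τ i) x) := by
    apply Continuous.integrable_of_hasCompactSupport
    · exact (((contDiff_pd2 hφ (τ i1) (σ i0)).continuous.mul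
        (contDiff_pd hh (τ i0)).continuous).mul (contDiff_pd hh (σ i1)).continuous).mul
        hcdP.continuous
    · exact (((hcs_pd (hcs_pd hφs (σ i0)) (τ i1)).mul_right).mul_right).mul_right
  have int2 : Integrable (fun x : Eu N => pd φ (σ i0) x * pd2 h (τ i1) (τ i0) x *
      pd h (σ i1) x * ∏ i ∈ K, pd2 h (σ i) (τ i) x) := by
    apply Continuous.integrable_of_hasCompactSupport
    · exact (((contDiff_pd hφ (σ i0)).continuous.mul
        (contDiff_pd2 hh (τ i1) (τ i0)).continuous).mul (contDiff_pd hh (σ i1)).continuous).mul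
        hcdP.continuous
    · exact (((hcs_pd hφs (σ i0)).mul_right).mul_right).mul_right
  have int3 : ∀ j ∈ K, Integrable (fun x : Eu N => pd φ (σ i0) x * pd h (τ i0) x *
      pd (pd2 h (σ j) (τ j)) (τ i1) x * pd h (σ i1) x *
      ∏ i ∈ K.erase j, pd2 h (σ i) (τ i) x) := by
    intro j hj
    apply Continuous.integrable_of_hasCompactSupport
    · exact (((((contDiff_pd hφ (σ i0)).continuous.mul
        (contDiff_pd hh (τ i0)).continuous).mul
        (contDiff_pd (contDiff_pd2 hh (σ j) (τ j)) (τ i1)).continuous).mul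
        (contDiff_pd hh (σ i1)).continuous).mul
        (contDiff_prodF (K.erase j) _ (fun k _ => contDiff_pd2 hh (σ k) (τ k))).continuous)
    · exact ((((hcs_pd hφs (σ i0)).mul_right).mul_right).mul_right).mul_right
  have int12 : Integrable (fun x : Eu N => pd2 φ (τ i1) (σ i0) x * pd h (τ i0) x *
      pd h (σ i1) x * ∏ i ∈ K, pd2 h (σ i) (τ i) x
      + pd φ (σ i0) x * pd2 h (τ i1) (τ i0) x * pd h (σ i1) x *
        ∏ i ∈ K, pd2 h (σ i) (τ i) x) := int1.add int2
  have intS : Integrable (fun x : Eu N => ∑ j ∈ K,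
      (pd φ (σ i0) x * pd h (τ i0) x * pd (pd2 h (σ j) (τ j)) (τ i1) x * pd h (σ i1) x *
        ∏ i ∈ K.erase j, pd2 h (σ i) (τ i) x)) := by
    apply integrable_finset_sum K int3
  rw [integral_add int12 intS, integral_add int1 int2, integral_finset_sum K int3]

end

noncomputable section

lemma sum_sign_cancel {N : ℕ} {G : Equiv.Perm (Fin N) → ℝ} {a b : Fin N} (hab : a ≠ b)
    (hG : ∀ σ, G (σ * Equiv.swap a b) = G σ) :
    ∑ σ : Equiv.Perm (Fin N), ((Equiv.Perm.sign σ : ℤ) : ℝ) * G σ = 0 := by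
  have key : ∑ σ : Equiv.Perm (Fin N), ((Equiv.Perm.sign (σ * Equiv.swap a b) : ℤ) : ℝ)
        * G (σ * Equiv.swap a b)
      = ∑ σ : Equiv.Perm (Fin N), ((Equiv.Perm.sign σ : ℤ) : ℝ) * G σ :=
    Fintype.sum_equiv (Equiv.mulRight (Equiv.swap a b)) _ _ (fun σ => rfl)
  have neg : ∀ σ : Equiv.Perm (Fin N),
      ((Equiv.Perm.sign (σ * Equiv.swap a b) : ℤ) : ℝ) * G (σ * Equiv.swap a b)
      = -(((Equiv.Perm.sign σ : ℤ) : ℝ) * G σ) := by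
    intro σ
    rw [hG, Equiv.Perm.sign_mul, Equiv.Perm.sign_swap hab]
    push_cast
    ring
  rw [Finset.sum_congr rfl (fun σ _ => neg σ), Finset.sum_neg_distrib] at key
  linarith

lemma det_double {N : ℕ} (M : Matrix (Fin N) (Fin N) ℝ) :
    ∑ σ : Equiv.Perm (Fin N), ∑ τ : Equiv.Perm (Fin N),
      ((Equiv.Perm.sign σ : ℤ) : ℝ) * ((Equiv.Perm.sign τ : ℤ) : ℝ) * ∏ i, M (σ i) (τ i)
    = (N.factorial : ℝ) * M.det := by
  rw [Finset.sum_comm]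
  have inner : ∀ τ : Equiv.Perm (Fin N),
      ∑ σ : Equiv.Perm (Fin N), ((Equiv.Perm.sign σ : ℤ) : ℝ) * ((Equiv.Perm.sign τ : ℤ) : ℝ)
        * ∏ i, M (σ i) (τ i) = M.det := by
    intro τ
    have := Fintype.sum_equiv (Equiv.mulRight τ)
      (fun ρ : Equiv.Perm (Fin N) => ((Equiv.Perm.sign ρ : ℤ) : ℝ) * ∏ i, M (ρ i) i)
      (fun σ : Equiv.Perm (Fin N) => ((Equiv.Perm.sign σ : ℤ) : ℝ) * ((Equiv.Perm.sign τ : ℤ) : ℝ)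
        * ∏ i, M (σ i) (τ i))
      ?_
    · rw [← this, Matrix.det_apply']
    · intro ρ
      show _ = ((Equiv.Perm.sign (ρ * τ) : ℤ) : ℝ) * _ * ∏ i, M ((ρ * τ) i) (τ i)
      rw [Equiv.Perm.sign_mul]
      have hp : ∏ i, M ((ρ * τ) i) (τ i) = ∏ i, M (ρ i) i := by
        rw [← Equiv.prod_comp τ (fun i => M (ρ i) i)]
        rfl
      rw [hp]
      push_cast
      rcases Int.units_eq_one_or (Equiv.Perm.sign τ) with hs | hs <;> rw [hs] <;> push_cast <;> ring
  rw [Finset.sum_congr rfl (fun τ _ => inner τ)]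
  simp [Finset.card_univ, Fintype.card_perm]

lemma cancelE (N : ℕ) (hN : 2 ≤ N) (h φ : Eu N → ℝ) (hh : ContDiff ℝ (⊤ : ℕ∞) h)
    (τ : Equiv.Perm (Fin N)) (j : Fin N) (hj : 1 ≤ (j : ℕ)) :
    ∑ σ : Equiv.Perm (Fin N), ((Equiv.Perm.sign σ : ℤ) : ℝ) *
      ∫ x : Eu N, φ x * pd h (τ ⟨0, Nat.zero_lt_of_lt (a := nat_lit 1) hN⟩) x * pd (pd2 h (σ j) (τ j)) (σ ⟨0, Nat.zero_lt_of_lt (a := nat_lit 1) hN⟩) x *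
        ∏ i ∈ (Finset.filter (fun i : Fin N => 1 ≤ (i : ℕ)) Finset.univ).erase j,
          pd2 h (σ i) (τ i) x = 0 := by
  set i0 : Fin N := ⟨0, Nat.zero_lt_of_lt (a := nat_lit 1) hN⟩ with hi0def
  have hab : i0 ≠ j := by
    intro hc
    rw [← hc] at hj
    simp [hi0def] at hj
  apply sum_sign_cancel hab
  intro σ
  refine congrArg (fun g : Eu N → ℝ => ∫ x : Eu N, g x) (funext fun x => ?_)
  have hprod : ∏ i ∈ (Finset.filter (fun i : Fin N => 1 ≤ (i : ℕ)) Finset.univ).erase j,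
      pd2 h ((σ * Equiv.swap i0 j) i) (τ i) x
      = ∏ i ∈ (Finset.filter (fun i : Fin N => 1 ≤ (i : ℕ)) Finset.univ).erase j,
      pd2 h (σ i) (τ i) x := by
    refine Finset.prod_congr rfl fun i hi => ?_
    have hi1 : i ≠ i0 := by
      have := (Finset.mem_filter.1 (Finset.mem_of_mem_erase hi)).2
      intro hc; rw [hc] at this; simp [hi0def] at this
    have hi2 : i ≠ j := Finset.ne_of_mem_erase hi
    rw [Equiv.Perm.mul_apply, Equiv.swap_apply_of_ne_of_ne hi1 hi2]
  rw [hprod]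
  have h1 : (σ * Equiv.swap i0 j) j = σ i0 := by
    rw [Equiv.Perm.mul_apply, Equiv.swap_apply_right]
  have h2 : (σ * Equiv.swap i0 j) i0 = σ j := by
    rw [Equiv.Perm.mul_apply, Equiv.swap_apply_left]
  rw [h1, h2, D3_swap13 hh (σ i0) (τ j) (σ j) x]

lemma cancelC (N : ℕ) (hN : 2 ≤ N) (h φ : Eu N → ℝ) (hh : ContDiff ℝ (⊤ : ℕ∞) h)
    (σ : Equiv.Perm (Fin N)) :
    ∑ τ : Equiv.Perm (Fin N), ((Equiv.Perm.sign τ : ℤ) : ℝ) *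
      ∫ x : Eu N, pd φ (σ ⟨0, Nat.zero_lt_of_lt (a := nat_lit 1) hN⟩) x * pd2 h (τ ⟨1, hN⟩) (τ ⟨0, Nat.zero_lt_of_lt (a := nat_lit 1) hN⟩) x *
        pd h (σ ⟨1, hN⟩) x *
        ∏ i ∈ Finset.filter (fun i : Fin N => 2 ≤ (i : ℕ)) Finset.univ,
          pd2 h (σ i) (τ i) x = 0 := by
  set i0 : Fin N := ⟨0, Nat.zero_lt_of_lt (a := nat_lit 1) hN⟩ with hi0def
  set i1 : Fin N := ⟨1, hN⟩ with hi1def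
  have hab : i0 ≠ i1 := by simp [hi0def, hi1def, Fin.ext_iff]
  apply sum_sign_cancel hab
  intro τ
  refine congrArg (fun g : Eu N → ℝ => ∫ x : Eu N, g x) (funext fun x => ?_)
  have hprod : ∏ i ∈ Finset.filter (fun i : Fin N => 2 ≤ (i : ℕ)) Finset.univ,
      pd2 h (σ i) ((τ * Equiv.swap i0 i1) i) x
      = ∏ i ∈ Finset.filter (fun i : Fin N => 2 ≤ (i : ℕ)) Finset.univ,
      pd2 h (σ i) (τ i) x := by
    refine Finset.prod_congr rfl fun i hi => ?_
    have hge := (Finset.mem_filter.1 hi).2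
    have hi1' : i ≠ i0 := by intro hc; rw [hc] at hge; simp [hi0def] at hge
    have hi2 : i ≠ i1 := by intro hc; rw [hc] at hge; simp [hi1def] at hge
    rw [Equiv.Perm.mul_apply, Equiv.swap_apply_of_ne_of_ne hi1' hi2]
  rw [hprod]
  have h1 : (τ * Equiv.swap i0 i1) i1 = τ i0 := by
    rw [Equiv.Perm.mul_apply, Equiv.swap_apply_right]
  have h2 : (τ * Equiv.swap i0 i1) i0 = τ i1 := by
    rw [Equiv.Perm.mul_apply, Equiv.swap_apply_left]
  rw [h1, h2, pd2_symm hh (τ i0) (τ i1) x]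

lemma cancelD (N : ℕ) (hN : 2 ≤ N) (h φ : Eu N → ℝ) (hh : ContDiff ℝ (⊤ : ℕ∞) h)
    (σ : Equiv.Perm (Fin N)) (j : Fin N) (hj : 2 ≤ (j : ℕ)) :
    ∑ τ : Equiv.Perm (Fin N), ((Equiv.Perm.sign τ : ℤ) : ℝ) *
      ∫ x : Eu N, pd φ (σ ⟨0, Nat.zero_lt_of_lt (a := nat_lit 1) hN⟩) x * pd h (τ ⟨0, Nat.zero_lt_of_lt (a := nat_lit 1) hN⟩) x *
        pd (pd2 h (σ j) (τ j)) (τ ⟨1, hN⟩) x * pd h (σ ⟨1, hN⟩) x *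
        ∏ i ∈ (Finset.filter (fun i : Fin N => 2 ≤ (i : ℕ)) Finset.univ).erase j,
          pd2 h (σ i) (τ i) x = 0 := by
  set i0 : Fin N := ⟨0, Nat.zero_lt_of_lt (a := nat_lit 1) hN⟩ with hi0def
  set i1 : Fin N := ⟨1, hN⟩ with hi1def
  have hab : i1 ≠ j := by
    intro hc; rw [← hc] at hj; simp [hi1def] at hj
  apply sum_sign_cancel hab
  intro τ
  refine congrArg (fun g : Eu N → ℝ => ∫ x : Eu N, g x) (funext fun x => ?_)
  have hprod : ∏ i ∈ (Finset.filter (fun i : Fin N => 2 ≤ (i : ℕ)) Finset.univ).erase j,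
      pd2 h (σ i) ((τ * Equiv.swap i1 j) i) x
      = ∏ i ∈ (Finset.filter (fun i : Fin N => 2 ≤ (i : ℕ)) Finset.univ).erase j,
      pd2 h (σ i) (τ i) x := by
    refine Finset.prod_congr rfl fun i hi => ?_
    have hge := (Finset.mem_filter.1 (Finset.mem_of_mem_erase hi)).2
    have hi1' : i ≠ i1 := by intro hc; rw [hc] at hge; simp [hi1def] at hge
    have hi2 : i ≠ j := Finset.ne_of_mem_erase hi
    rw [Equiv.Perm.mul_apply, Equiv.swap_apply_of_ne_of_ne hi1' hi2]
  rw [hprod]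
  have h0 : (τ * Equiv.swap i1 j) i0 = τ i0 := by
    rw [Equiv.Perm.mul_apply, Equiv.swap_apply_of_ne_of_ne]
    · simp [hi0def, hi1def, Fin.ext_iff]
    · intro hc; rw [← hc] at hj; simp [hi0def] at hj
  have h1 : (τ * Equiv.swap i1 j) i1 = τ j := by
    rw [Equiv.Perm.mul_apply, Equiv.swap_apply_left]
  have h2 : (τ * Equiv.swap i1 j) j = τ i1 := by
    rw [Equiv.Perm.mul_apply, Equiv.swap_apply_right]
  rw [h0, h1, h2, D3_swap23 hh (σ j) (τ i1) (τ j) x]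

lemma sumstep2 (N : ℕ) (hN : 2 ≤ N) (h φ : Eu N → ℝ)
    (hh : ContDiff ℝ (⊤ : ℕ∞) h) (hφ : ContDiff ℝ (⊤ : ℕ∞) φ) (hφs : HasCompactSupport φ) :
    (∑ σ : Equiv.Perm (Fin N), ∑ τ : Equiv.Perm (Fin N),
      ((Equiv.Perm.sign σ : ℤ) : ℝ) * ((Equiv.Perm.sign τ : ℤ) : ℝ) *
        ∫ x : Eu N, φ x * ∏ i, pd2 h (σ i) (τ i) x)
    = -(∑ σ : Equiv.Perm (Fin N), ∑ τ : Equiv.Perm (Fin N),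
      ((Equiv.Perm.sign σ : ℤ) : ℝ) * ((Equiv.Perm.sign τ : ℤ) : ℝ) *
        ∫ x : Eu N, pd φ (σ ⟨0, Nat.zero_lt_of_lt (a := nat_lit 1) hN⟩) x * pd h (τ ⟨0, Nat.zero_lt_of_lt (a := nat_lit 1) hN⟩) x *
          ∏ i ∈ Finset.filter (fun i : Fin N => 1 ≤ (i : ℕ)) Finset.univ,
            pd2 h (σ i) (τ i) x) := by
  rw [Finset.sum_comm]
  have inner : ∀ τ : Equiv.Perm (Fin N),
      ∑ σ : Equiv.Perm (Fin N), ((Equiv.Perm.sign σ : ℤ) : ℝ) * ((Equiv.Perm.sign τ : ℤ) : ℝ) *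
        ∫ x : Eu N, φ x * ∏ i, pd2 h (σ i) (τ i) x
      = -(∑ σ : Equiv.Perm (Fin N), ((Equiv.Perm.sign σ : ℤ) : ℝ) *
          ((Equiv.Perm.sign τ : ℤ) : ℝ) *
          ∫ x : Eu N, pd φ (σ ⟨0, Nat.zero_lt_of_lt (a := nat_lit 1) hN⟩) x * pd h (τ ⟨0, Nat.zero_lt_of_lt (a := nat_lit 1) hN⟩) x *
            ∏ i ∈ Finset.filter (fun i : Fin N => 1 ≤ (i : ℕ)) Finset.univ,
              pd2 h (σ i) (τ i) x) := by
    intro τ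
    have expand : ∀ σ : Equiv.Perm (Fin N),
        ((Equiv.Perm.sign σ : ℤ) : ℝ) * ((Equiv.Perm.sign τ : ℤ) : ℝ) *
          ∫ x : Eu N, φ x * ∏ i, pd2 h (σ i) (τ i) x
        = -(((Equiv.Perm.sign σ : ℤ) : ℝ) * ((Equiv.Perm.sign τ : ℤ) : ℝ) *
            ∫ x : Eu N, pd φ (σ ⟨0, Nat.zero_lt_of_lt (a := nat_lit 1) hN⟩) x * pd h (τ ⟨0, Nat.zero_lt_of_lt (a := nat_lit 1) hN⟩) x *
              ∏ i ∈ Finset.filter (fun i : Fin N => 1 ≤ (i : ℕ)) Finset.univ,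
                pd2 h (σ i) (τ i) x)
          + ∑ j ∈ Finset.filter (fun i : Fin N => 1 ≤ (i : ℕ)) Finset.univ,
            -(((Equiv.Perm.sign τ : ℤ) : ℝ) * (((Equiv.Perm.sign σ : ℤ) : ℝ) *
              ∫ x : Eu N, φ x * pd h (τ ⟨0, Nat.zero_lt_of_lt (a := nat_lit 1) hN⟩) x *
                pd (pd2 h (σ j) (τ j)) (σ ⟨0, Nat.zero_lt_of_lt (a := nat_lit 1) hN⟩) x *
                ∏ i ∈ (Finset.filter (fun i : Fin N => 1 ≤ (i : ℕ)) Finset.univ).erase j,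
                  pd2 h (σ i) (τ i) x)) := by
      intro σ
      rw [step2_pt N hN h φ hh hφ hφs σ τ, mul_neg, mul_add, neg_add, Finset.mul_sum,
        ← Finset.sum_neg_distrib]
      congr 1
      exact Finset.sum_congr rfl fun j hj => by ring
    rw [Finset.sum_congr rfl (fun σ _ => expand σ), Finset.sum_add_distrib]
    have hz : ∑ σ : Equiv.Perm (Fin N),
        ∑ j ∈ Finset.filter (fun i : Fin N => 1 ≤ (i : ℕ)) Finset.univ,
          -(((Equiv.Perm.sign τ : ℤ) : ℝ) * (((Equiv.Perm.sign σ : ℤ) : ℝ) *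
            ∫ x : Eu N, φ x * pd h (τ ⟨0, Nat.zero_lt_of_lt (a := nat_lit 1) hN⟩) x *
              pd (pd2 h (σ j) (τ j)) (σ ⟨0, Nat.zero_lt_of_lt (a := nat_lit 1) hN⟩) x *
              ∏ i ∈ (Finset.filter (fun i : Fin N => 1 ≤ (i : ℕ)) Finset.univ).erase j,
                pd2 h (σ i) (τ i) x)) = 0 := by
      rw [Finset.sum_comm]
      refine Finset.sum_eq_zero fun j hj => ?_
      have hj1 : 1 ≤ (j : ℕ) := (Finset.mem_filter.1 hj).2
      rw [Finset.sum_neg_distrib, ← Finset.mul_sum, cancelE N hN h φ hh τ j hj1,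
        mul_zero, neg_zero]
    rw [hz, add_zero, Finset.sum_neg_distrib]
  rw [Finset.sum_congr rfl (fun τ _ => inner τ), Finset.sum_neg_distrib]
  congr 1
  exact Finset.sum_comm

lemma sumstep3 (N : ℕ) (hN : 2 ≤ N) (h φ : Eu N → ℝ)
    (hh : ContDiff ℝ (⊤ : ℕ∞) h) (hφ : ContDiff ℝ (⊤ : ℕ∞) φ) (hφs : HasCompactSupport φ) :
    (∑ σ : Equiv.Perm (Fin N), ∑ τ : Equiv.Perm (Fin N),
      ((Equiv.Perm.sign σ : ℤ) : ℝ) * ((Equiv.Perm.sign τ : ℤ) : ℝ) *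
        ∫ x : Eu N, pd φ (σ ⟨0, Nat.zero_lt_of_lt (a := nat_lit 1) hN⟩) x * pd h (τ ⟨0, Nat.zero_lt_of_lt (a := nat_lit 1) hN⟩) x *
          ∏ i ∈ Finset.filter (fun i : Fin N => 1 ≤ (i : ℕ)) Finset.univ,
            pd2 h (σ i) (τ i) x)
    = -(∑ σ : Equiv.Perm (Fin N), ∑ τ : Equiv.Perm (Fin N),
      ((Equiv.Perm.sign σ : ℤ) : ℝ) * ((Equiv.Perm.sign τ : ℤ) : ℝ) *
        ∫ x : Eu N, pd2 φ (τ ⟨1, hN⟩) (σ ⟨0, Nat.zero_lt_of_lt (a := nat_lit 1) hN⟩) x * pd h (τ ⟨0, Nat.zero_lt_of_lt (a := nat_lit 1) hN⟩) x *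
          pd h (σ ⟨1, hN⟩) x *
          ∏ i ∈ Finset.filter (fun i : Fin N => 2 ≤ (i : ℕ)) Finset.univ,
            pd2 h (σ i) (τ i) x) := by
  have inner : ∀ σ : Equiv.Perm (Fin N),
      ∑ τ : Equiv.Perm (Fin N), ((Equiv.Perm.sign σ : ℤ) : ℝ) * ((Equiv.Perm.sign τ : ℤ) : ℝ) *
        ∫ x : Eu N, pd φ (σ ⟨0, Nat.zero_lt_of_lt (a := nat_lit 1) hN⟩) x * pd h (τ ⟨0, Nat.zero_lt_of_lt (a := nat_lit 1) hN⟩) x *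
          ∏ i ∈ Finset.filter (fun i : Fin N => 1 ≤ (i : ℕ)) Finset.univ,
            pd2 h (σ i) (τ i) x
      = -(∑ τ : Equiv.Perm (Fin N), ((Equiv.Perm.sign σ : ℤ) : ℝ) *
          ((Equiv.Perm.sign τ : ℤ) : ℝ) *
          ∫ x : Eu N, pd2 φ (τ ⟨1, hN⟩) (σ ⟨0, Nat.zero_lt_of_lt (a := nat_lit 1) hN⟩) x * pd h (τ ⟨0, Nat.zero_lt_of_lt (a := nat_lit 1) hN⟩) x *
            pd h (σ ⟨1, hN⟩) x *
            ∏ i ∈ Finset.filter (fun i : Fin N => 2 ≤ (i : ℕ)) Finset.univ,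
              pd2 h (σ i) (τ i) x) := by
    intro σ
    have expand : ∀ τ : Equiv.Perm (Fin N),
        ((Equiv.Perm.sign σ : ℤ) : ℝ) * ((Equiv.Perm.sign τ : ℤ) : ℝ) *
          ∫ x : Eu N, pd φ (σ ⟨0, Nat.zero_lt_of_lt (a := nat_lit 1) hN⟩) x * pd h (τ ⟨0, Nat.zero_lt_of_lt (a := nat_lit 1) hN⟩) x *
            ∏ i ∈ Finset.filter (fun i : Fin N => 1 ≤ (i : ℕ)) Finset.univ,
              pd2 h (σ i) (τ i) x
        = (-(((Equiv.Perm.sign σ : ℤ) : ℝ) * ((Equiv.Perm.sign τ : ℤ) : ℝ) *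
            ∫ x : Eu N, pd2 φ (τ ⟨1, hN⟩) (σ ⟨0, Nat.zero_lt_of_lt (a := nat_lit 1) hN⟩) x * pd h (τ ⟨0, Nat.zero_lt_of_lt (a := nat_lit 1) hN⟩) x *
              pd h (σ ⟨1, hN⟩) x *
              ∏ i ∈ Finset.filter (fun i : Fin N => 2 ≤ (i : ℕ)) Finset.univ,
                pd2 h (σ i) (τ i) x)
          + -(((Equiv.Perm.sign σ : ℤ) : ℝ) * ((Equiv.Perm.sign τ : ℤ) : ℝ) *
            ∫ x : Eu N, pd φ (σ ⟨0, Nat.zero_lt_of_lt (a := nat_lit 1) hN⟩) x * pd2 h (τ ⟨1, hN⟩) (τ ⟨0, Nat.zero_lt_of_lt (a := nat_lit 1) hN⟩) x *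
              pd h (σ ⟨1, hN⟩) x *
              ∏ i ∈ Finset.filter (fun i : Fin N => 2 ≤ (i : ℕ)) Finset.univ,
                pd2 h (σ i) (τ i) x))
          + ∑ j ∈ Finset.filter (fun i : Fin N => 2 ≤ (i : ℕ)) Finset.univ,
            -(((Equiv.Perm.sign σ : ℤ) : ℝ) * ((Equiv.Perm.sign τ : ℤ) : ℝ) *
              ∫ x : Eu N, pd φ (σ ⟨0, Nat.zero_lt_of_lt (a := nat_lit 1) hN⟩) x * pd h (τ ⟨0, Nat.zero_lt_of_lt (a := nat_lit 1) hN⟩) x *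
                pd (pd2 h (σ j) (τ j)) (τ ⟨1, hN⟩) x * pd h (σ ⟨1, hN⟩) x *
                ∏ i ∈ (Finset.filter (fun i : Fin N => 2 ≤ (i : ℕ)) Finset.univ).erase j,
                  pd2 h (σ i) (τ i) x) := by
      intro τ
      rw [step3_pt N hN h φ hh hφ hφs σ τ, mul_neg, mul_add, mul_add, neg_add, neg_add,
        Finset.mul_sum, ← Finset.sum_neg_distrib]
    rw [Finset.sum_congr rfl (fun τ _ => expand τ), Finset.sum_add_distrib,
      Finset.sum_add_distrib]
    have hzC : ∑ τ : Equiv.Perm (Fin N),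
        -(((Equiv.Perm.sign σ : ℤ) : ℝ) * ((Equiv.Perm.sign τ : ℤ) : ℝ) *
          ∫ x : Eu N, pd φ (σ ⟨0, Nat.zero_lt_of_lt (a := nat_lit 1) hN⟩) x * pd2 h (τ ⟨1, hN⟩) (τ ⟨0, Nat.zero_lt_of_lt (a := nat_lit 1) hN⟩) x *
            pd h (σ ⟨1, hN⟩) x *
            ∏ i ∈ Finset.filter (fun i : Fin N => 2 ≤ (i : ℕ)) Finset.univ,
              pd2 h (σ i) (τ i) x) = 0 := by
      rw [Finset.sum_neg_distrib,
        Finset.sum_congr rfl (fun τ _ => by ring :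
          ∀ τ ∈ (Finset.univ : Finset (Equiv.Perm (Fin N))),
            ((Equiv.Perm.sign σ : ℤ) : ℝ) * ((Equiv.Perm.sign τ : ℤ) : ℝ) *
            ∫ x : Eu N, pd φ (σ ⟨0, Nat.zero_lt_of_lt (a := nat_lit 1) hN⟩) x *
              pd2 h (τ ⟨1, hN⟩) (τ ⟨0, Nat.zero_lt_of_lt (a := nat_lit 1) hN⟩) x * pd h (σ ⟨1, hN⟩) x *
              ∏ i ∈ Finset.filter (fun i : Fin N => 2 ≤ (i : ℕ)) Finset.univ,
                pd2 h (σ i) (τ i) x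
            = ((Equiv.Perm.sign σ : ℤ) : ℝ) * (((Equiv.Perm.sign τ : ℤ) : ℝ) *
            ∫ x : Eu N, pd φ (σ ⟨0, Nat.zero_lt_of_lt (a := nat_lit 1) hN⟩) x *
              pd2 h (τ ⟨1, hN⟩) (τ ⟨0, Nat.zero_lt_of_lt (a := nat_lit 1) hN⟩) x * pd h (σ ⟨1, hN⟩) x *
              ∏ i ∈ Finset.filter (fun i : Fin N => 2 ≤ (i : ℕ)) Finset.univ,
                pd2 h (σ i) (τ i) x)),
        ← Finset.mul_sum, cancelC N hN h φ hh σ, mul_zero, neg_zero]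
    have hzD : ∑ τ : Equiv.Perm (Fin N),
        ∑ j ∈ Finset.filter (fun i : Fin N => 2 ≤ (i : ℕ)) Finset.univ,
          -(((Equiv.Perm.sign σ : ℤ) : ℝ) * ((Equiv.Perm.sign τ : ℤ) : ℝ) *
            ∫ x : Eu N, pd φ (σ ⟨0, Nat.zero_lt_of_lt (a := nat_lit 1) hN⟩) x * pd h (τ ⟨0, Nat.zero_lt_of_lt (a := nat_lit 1) hN⟩) x *
              pd (pd2 h (σ j) (τ j)) (τ ⟨1, hN⟩) x * pd h (σ ⟨1, hN⟩) x *
              ∏ i ∈ (Finset.filter (fun i : Fin N => 2 ≤ (i : ℕ)) Finset.univ).erase j,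
                pd2 h (σ i) (τ i) x) = 0 := by
      rw [Finset.sum_comm]
      refine Finset.sum_eq_zero fun j hj => ?_
      have hj2 : 2 ≤ (j : ℕ) := (Finset.mem_filter.1 hj).2
      rw [Finset.sum_neg_distrib,
        Finset.sum_congr rfl (fun τ _ => by ring :
          ∀ τ ∈ (Finset.univ : Finset (Equiv.Perm (Fin N))),
            ((Equiv.Perm.sign σ : ℤ) : ℝ) * ((Equiv.Perm.sign τ : ℤ) : ℝ) *
            ∫ x : Eu N, pd φ (σ ⟨0, Nat.zero_lt_of_lt (a := nat_lit 1) hN⟩) x * pd h (τ ⟨0, Nat.zero_lt_of_lt (a := nat_lit 1) hN⟩) x *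
              pd (pd2 h (σ j) (τ j)) (τ ⟨1, hN⟩) x * pd h (σ ⟨1, hN⟩) x *
              ∏ i ∈ (Finset.filter (fun i : Fin N => 2 ≤ (i : ℕ)) Finset.univ).erase j,
                pd2 h (σ i) (τ i) x
            = ((Equiv.Perm.sign σ : ℤ) : ℝ) * (((Equiv.Perm.sign τ : ℤ) : ℝ) *
            ∫ x : Eu N, pd φ (σ ⟨0, Nat.zero_lt_of_lt (a := nat_lit 1) hN⟩) x * pd h (τ ⟨0, Nat.zero_lt_of_lt (a := nat_lit 1) hN⟩) x *
              pd (pd2 h (σ j) (τ j)) (τ ⟨1, hN⟩) x * pd h (σ ⟨1, hN⟩) x *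
              ∏ i ∈ (Finset.filter (fun i : Fin N => 2 ≤ (i : ℕ)) Finset.univ).erase j,
                pd2 h (σ i) (τ i) x)),
        ← Finset.mul_sum, cancelD N hN h φ hh σ j hj2, mul_zero, neg_zero]
    rw [hzC, hzD, add_zero, add_zero, Finset.sum_neg_distrib]
  rw [Finset.sum_congr rfl (fun σ _ => inner σ), Finset.sum_neg_distrib]

lemma sumstep4 (N : ℕ) (hN : 2 ≤ N) (h φ : Eu N → ℝ)
    (hh : ContDiff ℝ (⊤ : ℕ∞) h) (hφ : ContDiff ℝ (⊤ : ℕ∞) φ) :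
    (∑ σ : Equiv.Perm (Fin N), ∑ τ : Equiv.Perm (Fin N),
      ((Equiv.Perm.sign σ : ℤ) : ℝ) * ((Equiv.Perm.sign τ : ℤ) : ℝ) *
        ∫ x : Eu N, pd2 φ (τ ⟨1, hN⟩) (σ ⟨0, Nat.zero_lt_of_lt (a := nat_lit 1) hN⟩) x * pd h (τ ⟨0, Nat.zero_lt_of_lt (a := nat_lit 1) hN⟩) x *
          pd h (σ ⟨1, hN⟩) x *
          ∏ i ∈ Finset.filter (fun i : Fin N => 2 ≤ (i : ℕ)) Finset.univ,
            pd2 h (σ i) (τ i) x)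
    = -(∑ σ : Equiv.Perm (Fin N), ∑ τ : Equiv.Perm (Fin N),
      ((Equiv.Perm.sign σ : ℤ) : ℝ) * ((Equiv.Perm.sign τ : ℤ) : ℝ) *
        ∫ x : Eu N, pd h (σ ⟨0, Nat.zero_lt_of_lt (a := nat_lit 1) hN⟩) x * pd h (τ ⟨0, Nat.zero_lt_of_lt (a := nat_lit 1) hN⟩) x *
          pd2 φ (σ ⟨1, hN⟩) (τ ⟨1, hN⟩) x *
          ∏ i ∈ Finset.filter (fun i : Fin N => 2 ≤ (i : ℕ)) Finset.univ,
            pd2 h (σ i) (τ i) x) := by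
  set i0 : Fin N := ⟨0, Nat.zero_lt_of_lt (a := nat_lit 1) hN⟩ with hi0def
  set i1 : Fin N := ⟨1, hN⟩ with hi1def
  have hab : i0 ≠ i1 := by simp [hi0def, hi1def, Fin.ext_iff]
  have reindex := Fintype.sum_equiv (Equiv.mulRight (Equiv.swap i0 i1))
    (fun σ : Equiv.Perm (Fin N) => ∑ τ : Equiv.Perm (Fin N),
      ((Equiv.Perm.sign (σ * Equiv.swap i0 i1) : ℤ) : ℝ) * ((Equiv.Perm.sign τ : ℤ) : ℝ) *
        ∫ x : Eu N, pd2 φ (τ i1) ((σ * Equiv.swap i0 i1) i0) x * pd h (τ i0) x *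
          pd h ((σ * Equiv.swap i0 i1) i1) x *
          ∏ i ∈ Finset.filter (fun i : Fin N => 2 ≤ (i : ℕ)) Finset.univ,
            pd2 h ((σ * Equiv.swap i0 i1) i) (τ i) x)
    (fun σ : Equiv.Perm (Fin N) => ∑ τ : Equiv.Perm (Fin N),
      ((Equiv.Perm.sign σ : ℤ) : ℝ) * ((Equiv.Perm.sign τ : ℤ) : ℝ) *
        ∫ x : Eu N, pd2 φ (τ i1) (σ i0) x * pd h (τ i0) x * pd h (σ i1) x *
          ∏ i ∈ Finset.filter (fun i : Fin N => 2 ≤ (i : ℕ)) Finset.univ,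
            pd2 h (σ i) (τ i) x)
    (fun σ => rfl)
  rw [← reindex]
  rw [← Finset.sum_neg_distrib]
  refine Finset.sum_congr rfl fun σ _ => ?_
  rw [← Finset.sum_neg_distrib]
  refine Finset.sum_congr rfl fun τ _ => ?_
  have hsgn : ((Equiv.Perm.sign (σ * Equiv.swap i0 i1) : ℤ) : ℝ)
      = -((Equiv.Perm.sign σ : ℤ) : ℝ) := by
    rw [Equiv.Perm.sign_mul, Equiv.Perm.sign_swap hab]
    push_cast
    ring
  have h1 : (σ * Equiv.swap i0 i1) i0 = σ i1 := by
    rw [Equiv.Perm.mul_apply, Equiv.swap_apply_left]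
  have h2 : (σ * Equiv.swap i0 i1) i1 = σ i0 := by
    rw [Equiv.Perm.mul_apply, Equiv.swap_apply_right]
  have hI : (∫ x : Eu N, pd2 φ (τ i1) ((σ * Equiv.swap i0 i1) i0) x * pd h (τ i0) x *
        pd h ((σ * Equiv.swap i0 i1) i1) x *
        ∏ i ∈ Finset.filter (fun i : Fin N => 2 ≤ (i : ℕ)) Finset.univ,
          pd2 h ((σ * Equiv.swap i0 i1) i) (τ i) x)
      = ∫ x : Eu N, pd h (σ i0) x * pd h (τ i0) x * pd2 φ (σ i1) (τ i1) x *
        ∏ i ∈ Finset.filter (fun i : Fin N => 2 ≤ (i : ℕ)) Finset.univ,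
          pd2 h (σ i) (τ i) x := by
    refine congrArg (fun g : Eu N → ℝ => ∫ x : Eu N, g x) (funext fun x => ?_)
    have hprod : ∏ i ∈ Finset.filter (fun i : Fin N => 2 ≤ (i : ℕ)) Finset.univ,
        pd2 h ((σ * Equiv.swap i0 i1) i) (τ i) x
        = ∏ i ∈ Finset.filter (fun i : Fin N => 2 ≤ (i : ℕ)) Finset.univ,
        pd2 h (σ i) (τ i) x := by
      refine Finset.prod_congr rfl fun i hi => ?_
      have hge := (Finset.mem_filter.1 hi).2
      have hne0 : i ≠ i0 := by intro hc; rw [hc] at hge; simp [hi0def] at hge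
      have hne1 : i ≠ i1 := by intro hc; rw [hc] at hge; simp [hi1def] at hge
      rw [Equiv.Perm.mul_apply, Equiv.swap_apply_of_ne_of_ne hne0 hne1]
    rw [hprod, h1, h2, pd2_symm hφ (τ i1) (σ i1) x]
    ring
  rw [hI, hsgn]
  ring

lemma key0 (N : ℕ) (h φ : Eu N → ℝ)
    (hh : ContDiff ℝ (⊤ : ℕ∞) h) (hφ : ContDiff ℝ (⊤ : ℕ∞) φ) (hφs : HasCompactSupport φ) :
    (N.factorial : ℝ) * ∫ x : Eu N, hessDet h x * φ x
    = ∑ σ : Equiv.Perm (Fin N), ∑ τ : Equiv.Perm (Fin N),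
      ((Equiv.Perm.sign σ : ℤ) : ℝ) * ((Equiv.Perm.sign τ : ℤ) : ℝ) *
        ∫ x : Eu N, φ x * ∏ i, pd2 h (σ i) (τ i) x := by
  have hint : ∀ σ τ : Equiv.Perm (Fin N),
      Integrable (fun x : Eu N => φ x * ∏ i, pd2 h (σ i) (τ i) x) := fun σ τ =>
    (hφ.continuous.mul (contDiff_prodF Finset.univ _
      (fun j _ => contDiff_pd2 hh (σ j) (τ j))).continuous).integrable_of_hasCompactSupport
      hφs.mul_right
  have e1 : ∀ σ : Equiv.Perm (Fin N),
      ∑ τ : Equiv.Perm (Fin N), ((Equiv.Perm.sign σ : ℤ) : ℝ) * ((Equiv.Perm.sign τ : ℤ) : ℝ) *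
        ∫ x : Eu N, φ x * ∏ i, pd2 h (σ i) (τ i) x
      = ∫ x : Eu N, ∑ τ : Equiv.Perm (Fin N),
          ((Equiv.Perm.sign σ : ℤ) : ℝ) * ((Equiv.Perm.sign τ : ℤ) : ℝ) *
            (φ x * ∏ i, pd2 h (σ i) (τ i) x) := by
    intro σ
    rw [integral_finset_sum _ (fun τ _ => (hint σ τ).const_mul _)]
    exact Finset.sum_congr rfl fun τ _ => (integral_const_mul _ _).symm
  rw [Finset.sum_congr rfl (fun σ _ => e1 σ),
    ← integral_finset_sum _ (fun σ _ => integrable_finset_sum _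
      (fun τ _ => (hint σ τ).const_mul _))]
  have hdet : ∀ x : Eu N,
      ∑ σ : Equiv.Perm (Fin N), ∑ τ : Equiv.Perm (Fin N),
        ((Equiv.Perm.sign σ : ℤ) : ℝ) * ((Equiv.Perm.sign τ : ℤ) : ℝ) *
          (φ x * ∏ i, pd2 h (σ i) (τ i) x)
      = (N.factorial : ℝ) * (hessDet h x * φ x) := by
    intro x
    have hdd := det_double (Matrix.of fun i j => pd2 h i j x)
    simp only [Matrix.of_apply] at hdd
    have lhs_eq : ∑ σ : Equiv.Perm (Fin N), ∑ τ : Equiv.Perm (Fin N),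
        ((Equiv.Perm.sign σ : ℤ) : ℝ) * ((Equiv.Perm.sign τ : ℤ) : ℝ) *
          (φ x * ∏ i, pd2 h (σ i) (τ i) x)
        = φ x * ∑ σ : Equiv.Perm (Fin N), ∑ τ : Equiv.Perm (Fin N),
          ((Equiv.Perm.sign σ : ℤ) : ℝ) * ((Equiv.Perm.sign τ : ℤ) : ℝ) *
            ∏ i, pd2 h (σ i) (τ i) x := by
      rw [Finset.mul_sum]
      refine Finset.sum_congr rfl fun σ _ => ?_
      rw [Finset.mul_sum]
      exact Finset.sum_congr rfl fun τ _ => by ring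
    rw [lhs_eq, hdd]
    show φ x * ((N.factorial : ℝ) * hessDet h x) = _
    ring
  rw [show (fun x : Eu N => ∑ σ : Equiv.Perm (Fin N), ∑ τ : Equiv.Perm (Fin N),
        ((Equiv.Perm.sign σ : ℤ) : ℝ) * ((Equiv.Perm.sign τ : ℤ) : ℝ) *
          (φ x * ∏ i, pd2 h (σ i) (τ i) x))
      = fun x : Eu N => (N.factorial : ℝ) * (hessDet h x * φ x) from funext hdet]
  exact (integral_const_mul _ _).symm

/-- The integration-by-parts identity for the Hessian determinant:
`∫ det(D²h) φ = −(1/N!) Σ_{σ,τ} sgn σ sgn τ ∫ (∂_{σ1}h)(∂_{τ1}h)(∂_{σ2}∂_{τ2}φ)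
  Π_{i≥3} (∂_{σi}∂_{τi}h)`. -/
theorem stmt6 (N : ℕ) (hN : 2 ≤ N) (h φ : Eu N → ℝ)
    (hh : ContDiff ℝ (⊤ : ℕ∞) h) (hhs : HasCompactSupport h)
    (hφ : ContDiff ℝ (⊤ : ℕ∞) φ) (hφs : HasCompactSupport φ) :
    ∫ x : Eu N, hessDet h x * φ x =
      -(1 / (N.factorial : ℝ)) *
        ∑ σ : Equiv.Perm (Fin N), ∑ τ : Equiv.Perm (Fin N),
          ((Equiv.Perm.sign σ : ℤ) : ℝ) * ((Equiv.Perm.sign τ : ℤ) : ℝ) *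
            ∫ x : Eu N,
              pd h (σ ⟨0, by omega⟩) x * pd h (τ ⟨0, by omega⟩) x *
              pd2 φ (σ ⟨1, by omega⟩) (τ ⟨1, by omega⟩) x *
              ∏ i ∈ Finset.filter (fun i : Fin N => 2 ≤ (i : ℕ)) Finset.univ,
                pd2 h (σ i) (τ i) x := by
  have k0 := key0 N h φ hh hφ hφs
  have s2 := sumstep2 N hN h φ hh hφ hφs
  have s3 := sumstep3 N hN h φ hh hφ hφs
  have s4 := sumstep4 N hN h φ hh hφ
  have e : (N.factorial : ℝ) * ∫ x : Eu N, hessDet h x * φ x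
      = -(-(-(∑ σ : Equiv.Perm (Fin N), ∑ τ : Equiv.Perm (Fin N),
          ((Equiv.Perm.sign σ : ℤ) : ℝ) * ((Equiv.Perm.sign τ : ℤ) : ℝ) *
            ∫ x : Eu N,
              pd h (σ ⟨0, by omega⟩) x * pd h (τ ⟨0, by omega⟩) x *
              pd2 φ (σ ⟨1, by omega⟩) (τ ⟨1, by omega⟩) x *
              ∏ i ∈ Finset.filter (fun i : Fin N => 2 ≤ (i : ℕ)) Finset.univ,
                pd2 h (σ i) (τ i) x))) :=
    k0.trans (s2.trans (congrArg Neg.neg (s3.trans (congrArg Neg.neg s4))))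
  rw [neg_neg] at e
  have hfac : (N.factorial : ℝ) ≠ 0 := Nat.cast_ne_zero.mpr (Nat.factorial_ne_zero N)
  have hI : ∫ x : Eu N, hessDet h x * φ x
      = (N.factorial : ℝ)⁻¹ * ((N.factorial : ℝ) * ∫ x : Eu N, hessDet h x * φ x) := by
    field_simp
  rw [hI, e]
  ring
end
end

section
/- Let N ≥ 2 and let h ∈ C_c^∞((0,1)) satisfy ∫₀¹ h(r) dr = 0. Define g : ℝ^N → ℝ by g(x) = ∫₀^{|x|} h(s) ds. Then g ∈ C_c^∞(ℝ^N) with support contained in the closed unit ball, and ∫_{ℝ^N} det(D²g)(x) |x|² dx = −(2 ω_{N−1} / N) ∫₀¹ h(r)^N r dr, where ω_{N−1} is the surface measure of the unit sphere S^{N−1} ⊂ ℝ^N. -/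
open MeasureTheory Real Filter
open scoped Matrix ContDiff

noncomputable section

theorem detlem {N : ℕ} (hN : 2 ≤ N) (a c : ℝ) (v : Fin N → ℝ) :
    (Matrix.of fun i j : Fin N => (if i = j then a else 0) + c * v i * v j).det
      = a ^ (N - 1) * (a + c * ∑ i, v i ^ 2) := by
  rcases eq_or_ne a 0 with rfl | ha
  · have h1 : (Matrix.of fun i j : Fin N => (if i = j then (0:ℝ) else 0) + c * v i * v j)
        = Matrix.diagonal (fun i => c * v i) * Matrix.of (fun _ j : Fin N => v j) := by
      ext i j
      simp [Matrix.mul_apply, Matrix.diagonal, Finset.sum_ite_eq, mul_assoc]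
    rw [h1, Matrix.det_mul]
    have h2 : (Matrix.of (fun _ j : Fin N => v j)).det = 0 := by
      apply Matrix.det_zero_of_row_eq (i := ⟨0, by omega⟩) (j := ⟨1, by omega⟩)
      · simp [Fin.ext_iff]
      · rfl
    rw [h2, mul_zero]
    rw [zero_pow (by omega : N - 1 ≠ 0)]
    ring
  · have h1 : (Matrix.of fun i j : Fin N => (if i = j then a else 0) + c * v i * v j)
        = a • (1 + Matrix.replicateCol (Fin 1) ((c/a) • v) * Matrix.replicateRow (Fin 1) v) := by
      ext i j
      simp only [Matrix.smul_apply, Matrix.add_apply, Matrix.one_apply, Matrix.mul_apply,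
        Matrix.replicateCol_apply, Matrix.replicateRow_apply, Fin.sum_univ_one, Pi.smul_apply, smul_eq_mul,
        Matrix.of_apply]
      rcases eq_or_ne i j with rfl | hij
      · field_simp
        simp
      · simp only [if_neg hij, smul_eq_mul]
        field_simp
        ring
    rw [h1, Matrix.det_smul]
    erw [Matrix.det_one_add_replicateCol_mul_replicateRow]
    have hd : v ⬝ᵥ (c/a) • v = (c/a) * ∑ i, v i ^ 2 := by
      simp [dotProduct, Finset.mul_sum, pow_two]; ring_nf
      congr 1; ext i; ring
    rw [hd]
    have hNN : a ^ N = a ^ (N-1) * a := by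
      rw [← pow_succ]; congr 1; omega
    field_simp [hNN]
    rw [Fintype.card_fin, hNN]
    ring

theorem hasFDerivAt_norm' {N : ℕ} {x : Eu N} (hx : x ≠ 0) :
    HasFDerivAt (fun y : Eu N => ‖y‖) (‖x‖⁻¹ • (innerSL ℝ x)) x := by
  have hx' : ‖x‖ ≠ 0 := norm_ne_zero_iff.2 hx
  have h1 : HasFDerivAt (fun y : Eu N => ‖y‖^2) (2 • (innerSL ℝ x)) x :=
    (hasFDerivAt_id x).norm_sq
  have h2 : HasDerivAt Real.sqrt (1 / (2 * Real.sqrt (‖x‖^2))) (‖x‖^2) :=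
    Real.hasDerivAt_sqrt (by positivity)
  have h3 := h2.comp_hasFDerivAt x h1
  have h4 : (Real.sqrt ∘ fun y : Eu N => ‖y‖^2) = fun y : Eu N => ‖y‖ := by
    ext y; simp [Function.comp, Real.sqrt_sq (norm_nonneg y)]
  rw [h4] at h3
  refine h3.congr_fderiv (Eq.symm ?_)
  rw [Real.sqrt_sq (norm_nonneg x)]
  ext v
  simp only [ContinuousLinearMap.coe_smul', Pi.smul_apply, smul_eq_mul]
  rw [nsmul_eq_mul]
  field_simp
  ring

/-- Chain rule for radial functions. -/
theorem radial_hasFDerivAt {N : ℕ} {F : ℝ → ℝ} {F' : ℝ} {x : Eu N} (hx : x ≠ 0)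
    (hF : HasDerivAt F F' ‖x‖) :
    HasFDerivAt (fun y : Eu N => F ‖y‖) ((F' * ‖x‖⁻¹) • (innerSL ℝ x)) x := by
  have := hF.comp_hasFDerivAt x (hasFDerivAt_norm' hx)
  rw [smul_smul] at this
  exact this

theorem inner_ebasis {N : ℕ} (x : Eu N) (i : Fin N) :
    (innerSL ℝ x) (EuclideanSpace.single i (1:ℝ)) = x i := by
  simp [EuclideanSpace.inner_single_right]

/-- The radial atom used in the scaling analysis: for `h ∈ C_c^∞((0,1))` with
`∫₀¹ h = 0` and `g(x) = ∫₀^{|x|} h`, the function `g` is smooth and compactly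
supported in the closed unit ball, and
`∫ det(D²g) |x|² dx = −(2 ω_{N−1} / N) ∫₀¹ h(r)^N r dr`, where
`ω_{N−1} = N · vol(B₁)` is the surface measure of the unit sphere. -/
theorem stmt7 (N : ℕ) (hN : 2 ≤ N) (h : ℝ → ℝ)
    (hh : ContDiff ℝ (⊤ : ℕ∞) h) (hhs : HasCompactSupport h)
    (hsupp : tsupport h ⊆ Set.Ioo 0 1)
    (hint : (∫ r in (0:ℝ)..1, h r) = 0)
    (g : Eu N → ℝ) (hg : ∀ x : Eu N, g x = ∫ s in (0:ℝ)..(‖x‖), h s) :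
    (ContDiff ℝ (⊤ : ℕ∞) g ∧ HasCompactSupport g ∧
      tsupport g ⊆ Metric.closedBall 0 1) ∧
    ∫ x : Eu N, hessDet g x * ‖x‖^2 =
      -(2 * ((N : ℝ) * (volume (Metric.ball (0 : Eu N) 1)).toReal) / (N : ℝ)) *
        ∫ r in (0:ℝ)..1, (h r)^N * r := by
  have hcont : Continuous h := hh.continuous
  have hdiff : Differentiable ℝ h := hh.differentiable (by simp)
  have hzero : ∀ t, t ∉ Set.Ioo (0:ℝ) 1 → h t = 0 := fun t ht =>
    image_eq_zero_of_notMem_tsupport (fun hc => ht (hsupp hc))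
  obtain ⟨ε, hε0, hεK⟩ : ∃ ε, 0 < ε ∧ tsupport h ⊆ Set.Ici ε := by
    rcases Set.eq_empty_or_nonempty (tsupport h) with hK | hK
    · exact ⟨1/2, by norm_num, by simp [hK]⟩
    · exact ⟨sInf (tsupport h), (hsupp (hhs.isCompact.sInf_mem hK)).1,
        fun t ht => csInf_le hhs.isCompact.bddBelow ht⟩
  have hheps : ∀ t, t < ε → h t = 0 := fun t ht =>
    image_eq_zero_of_notMem_tsupport (fun hc => absurd (hεK hc) (not_le.2 ht))
  -- The 1D profile H
  set H : ℝ → ℝ := fun r => ∫ s in (0:ℝ)..r, h s with hHdef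
  have hgeq : g = fun x : Eu N => H ‖x‖ := funext hg
  subst hgeq
  have Hderiv : ∀ r, HasDerivAt H (h r) r := fun r =>
    (hcont.integral_hasStrictDerivAt 0 r).hasDerivAt
  have Hsmooth : ContDiff ℝ (⊤ : ℕ∞) H := by
    rw [show ((⊤ : ℕ∞) : WithTop ℕ∞) = ∞ from rfl, contDiff_infty_iff_deriv]
    refine ⟨fun r => (Hderiv r).differentiableAt, ?_⟩
    have : deriv H = h := funext fun r => (Hderiv r).deriv
    rw [this]
    exact hh
  have H0 : ∀ r, r < ε → H r = 0 := by
    intro r hr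
    have : Set.EqOn h 0 (Set.uIcc 0 r) := by
      intro s hs
      have : s ≤ max 0 r := (Set.mem_uIcc.1 hs).elim (fun h' => le_max_of_le_right h'.2)
        (fun h' => le_max_of_le_left h'.2)
      exact hheps s (lt_of_le_of_lt this (max_lt hε0 hr))
    rw [hHdef]
    simpa using intervalIntegral.integral_congr this
  have H1 : ∀ r, 1 ≤ r → H r = 0 := by
    intro r hr
    have hsplit := intervalIntegral.integral_add_adjacent_intervals
      (hcont.intervalIntegrable 0 1) (hcont.intervalIntegrable 1 r) (μ := volume)
    have h2 : (∫ s in (1:ℝ)..r, h s) = 0 := by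
      have : Set.EqOn h 0 (Set.uIcc 1 r) := by
        intro s hs
        have : (1:ℝ) ≤ s := by
          rcases Set.mem_uIcc.1 hs with h' | h'
          · exact h'.1
          · exact le_trans hr h'.1
        exact hzero s (fun hc => absurd hc.2 (not_lt.2 this))
      simpa using intervalIntegral.integral_congr this
    rw [hHdef]
    simp only
    rw [← hsplit, hint, h2, add_zero]
  -- first conjunct
  have hg0 : ∀ y : Eu N, ‖y‖ < ε → H ‖y‖ = 0 := fun y hy => H0 _ hy
  have hsm : ContDiff ℝ (⊤ : ℕ∞) (fun x : Eu N => H ‖x‖) := by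
    rw [contDiff_iff_contDiffAt]
    intro x
    rcases lt_or_ge ‖x‖ ε with hlt | hge
    · apply ContDiffAt.congr_of_eventuallyEq (contDiffAt_const (c := (0:ℝ)))
      filter_upwards [Metric.ball_mem_nhds x (by linarith : (0:ℝ) < ε - ‖x‖)] with z hz
      apply hg0
      have := mem_ball_iff_norm.1 hz
      calc ‖z‖ ≤ ‖z - x‖ + ‖x‖ := by
            simpa using norm_add_le (z - x) x
        _ < ε := by linarith
    · have hx : x ≠ 0 := by
        intro h0
        rw [h0, norm_zero] at hge
        linarith
      exact (Hsmooth.contDiffAt).comp x (contDiffAt_norm ℝ hx)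
  have hsupg : tsupport (fun x : Eu N => H ‖x‖) ⊆ Metric.closedBall 0 1 := by
    apply closure_minimal ?_ Metric.isClosed_closedBall
    intro x hx
    simp only [Function.mem_support] at hx
    by_contra hc
    apply hx
    apply H1
    have : dist x 0 > 1 := by
      simpa [Metric.mem_closedBall] using hc
    rw [dist_zero_right] at this
    linarith
  have hcs : HasCompactSupport (fun x : Eu N => H ‖x‖) :=
    HasCompactSupport.of_support_subset_isCompact (K := Metric.closedBall 0 1)
      (isCompact_closedBall 0 1) (subset_trans subset_closure hsupg)
  refine ⟨⟨hsm, hcs, hsupg⟩, ?_⟩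
  -- the auxiliary profile A with t * A t = h t
  set A : ℝ → ℝ := fun t => if t ≤ ε/2 then 0 else h t / t with hAdef
  have hAeq : ∀ t : ℝ, t ≠ 0 → A t = h t / t := by
    intro t ht
    rw [hAdef]
    by_cases hle : t ≤ ε/2
    · simp only [if_pos hle]
      rw [hheps t (by linarith), zero_div]
    · simp only [if_neg hle]
  have hA0 : ∀ t, t < ε → A t = 0 := by
    intro t ht
    rcases eq_or_ne t 0 with rfl | ht0
    · rw [hAdef]; simp [le_of_lt (half_pos hε0)]
    · rw [hAeq t ht0, hheps t ht, zero_div]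
  have htA : ∀ t, t * A t = h t := by
    intro t
    rcases eq_or_ne t 0 with rfl | ht
    · rw [zero_mul, hheps 0 hε0]
    · rw [hAeq t ht]; field_simp
  have hAsm : ContDiff ℝ (⊤ : ℕ∞) A := by
    rw [contDiff_iff_contDiffAt]
    intro t
    rcases lt_or_ge t ε with hlt | hge
    · apply ContDiffAt.congr_of_eventuallyEq (contDiffAt_const (c := (0:ℝ)))
      filter_upwards [Iio_mem_nhds hlt] with s hs
      exact hA0 s hs
    · have ht0 : t ≠ 0 := ne_of_gt (lt_of_lt_of_le hε0 hge)
      apply ContDiffAt.congr_of_eventuallyEq ((hh.contDiffAt).div contDiffAt_id ht0)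
      filter_upwards [compl_singleton_mem_nhds ht0] with s hs
      exact hAeq s hs
  have hAdiff : Differentiable ℝ A := hAsm.differentiable (by simp)
  have hAd : ∀ t : ℝ, A t + t * deriv A t = deriv h t := by
    intro t
    have h1 : HasDerivAt (fun s => s * A s) (1 * A t + t * deriv A t) t :=
      (hasDerivAt_id t).mul ((hAdiff t).hasDerivAt)
    have h2 : (fun s : ℝ => s * A s) = h := funext htA
    rw [h2] at h1
    rw [h1.deriv]
    ring
  -- first derivative of g
  have hpd : ∀ (j : Fin N) (y : Eu N),
      fderiv ℝ (fun x : Eu N => H ‖x‖) y (ebasis j) = A ‖y‖ * y j := by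
    intro j y
    rcases eq_or_ne y 0 with rfl | hy
    · have hev : (fun x : Eu N => H ‖x‖) =ᶠ[nhds (0 : Eu N)] (fun _ => (0:ℝ)) := by
        filter_upwards [Metric.ball_mem_nhds (0 : Eu N) hε0] with z hz
        exact hg0 z (by simpa [mem_ball_zero_iff] using hz)
      rw [hev.fderiv_eq, fderiv_fun_const]
      simp
    · have hr0 : ‖y‖ ≠ 0 := norm_ne_zero_iff.2 hy
      have hF := radial_hasFDerivAt (F := H) hy (Hderiv ‖y‖)
      rw [hF.fderiv]
      rw [ContinuousLinearMap.smul_apply]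
      rw [show ebasis j = EuclideanSpace.single j (1:ℝ) from rfl, inner_ebasis]
      rw [hAeq _ hr0]
      rw [smul_eq_mul]
      field_simp
  -- second derivatives
  have hpd2 : ∀ (i j : Fin N) (x : Eu N), x ≠ 0 → pd2 (fun x : Eu N => H ‖x‖) i j x
      = (if i = j then A ‖x‖ else 0) + (deriv A ‖x‖ * ‖x‖⁻¹) * x i * x j := by
    intro i j x hx
    have hfun : (fun y : Eu N => fderiv ℝ (fun x : Eu N => H ‖x‖) y (ebasis j))
        = fun y : Eu N => A ‖y‖ * y j := funext (fun y => hpd j y)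
    rw [pd2, hfun]
    have hA' : HasFDerivAt (fun y : Eu N => A ‖y‖)
        ((deriv A ‖x‖ * ‖x‖⁻¹) • (innerSL ℝ x)) x :=
      radial_hasFDerivAt hx ((hAdiff ‖x‖).hasDerivAt)
    have hproj : HasFDerivAt (fun y : Eu N => y j)
        (EuclideanSpace.proj j : Eu N →L[ℝ] ℝ) x :=
      (EuclideanSpace.proj (𝕜 := ℝ) j).hasFDerivAt
    have hmul := hA'.mul hproj
    rw [show (fun y : Eu N => A ‖y‖ * y j) = (fun y : Eu N => A ‖y‖) * (fun y : Eu N => y j) from rfl, hmul.fderiv]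
    rw [ContinuousLinearMap.add_apply, ContinuousLinearMap.smul_apply,
      ContinuousLinearMap.smul_apply, ContinuousLinearMap.smul_apply]
    rw [show ebasis i = EuclideanSpace.single i (1:ℝ) from rfl, inner_ebasis]
    have hproje : (EuclideanSpace.proj (𝕜 := ℝ) j) (EuclideanSpace.single i (1:ℝ))
        = if i = j then (1:ℝ) else 0 := by
      simp [EuclideanSpace.single_apply, eq_comm]
    rw [hproje]
    rcases eq_or_ne i j with rfl | hij
    · simp only [if_pos rfl, smul_eq_mul, if_true, eq_self_iff_true]
      ring
    · simp only [if_neg hij, smul_eq_mul]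
      ring
  -- Hessian determinant
  have hhess : ∀ x : Eu N, x ≠ 0 →
      hessDet (fun x : Eu N => H ‖x‖) x = (A ‖x‖)^(N-1) * deriv h ‖x‖ := by
    intro x hx
    have hr0 : ‖x‖ ≠ 0 := norm_ne_zero_iff.2 hx
    have hmx : (Matrix.of fun i j => pd2 (fun x : Eu N => H ‖x‖) i j x)
        = Matrix.of fun i j : Fin N =>
            (if i = j then A ‖x‖ else 0) + (deriv A ‖x‖ * ‖x‖⁻¹) * (x i) * (x j) := by
      ext i j
      simp only [Matrix.of_apply]
      rw [hpd2 i j x hx]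
    rw [hessDet, hmx, detlem hN]
    have hsum : ∑ i, (x i)^2 = ‖x‖^2 := by
      rw [EuclideanSpace.norm_eq, Real.sq_sqrt (by positivity)]
      congr 1
      ext i
      rw [Real.norm_eq_abs, sq_abs]
    rw [hsum]
    have h2 : A ‖x‖ + deriv A ‖x‖ * ‖x‖⁻¹ * ‖x‖^2 = deriv h ‖x‖ := by
      rw [← hAd ‖x‖]
      field_simp
    rw [h2]
  -- pointwise identity for the integrand
  have key : ∀ x : Eu N, hessDet (fun x : Eu N => H ‖x‖) x * ‖x‖^2
      = (fun t : ℝ => (A t)^(N-1) * deriv h t * t^2) ‖x‖ := by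
    intro x
    rcases eq_or_ne x 0 with rfl | hx
    · simp
    · rw [hhess x hx]
  -- pass to polar coordinates
  have hrw : (fun x : Eu N => hessDet (fun x : Eu N => H ‖x‖) x * ‖x‖^2)
      = fun x : Eu N => (fun t : ℝ => (A t)^(N-1) * deriv h t * t^2) ‖x‖ := funext key
  rw [show (∫ x : Eu N, hessDet (fun x : Eu N => H ‖x‖) x * ‖x‖^2)
      = ∫ x : Eu N, (fun t : ℝ => (A t)^(N-1) * deriv h t * t^2) ‖x‖ from by rw [← hrw]]
  haveI : Nontrivial (Eu N) := by
    refine ⟨⟨EuclideanSpace.single (⟨0, by omega⟩ : Fin N) (1:ℝ), 0, ?_⟩⟩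
    intro hc
    have := congrArg norm hc
    simp at this
  rw [MeasureTheory.integral_fun_norm_addHaar (volume : Measure (Eu N))
    (fun t : ℝ => (A t)^(N-1) * deriv h t * t^2)]
  rw [finrank_euclideanSpace_fin]
  have hNR : (N:ℝ) ≠ 0 := Nat.cast_ne_zero.2 (by omega)
  have hN1 : N - 1 ≠ 0 := by omega
  have hderivcont : Continuous (deriv h) := by
    have hh' : ContDiff ℝ ∞ (deriv h) := (contDiff_infty_iff_deriv.mp hh).2
    exact hh'.continuous
  -- replace A by h in the radial integral
  have e1 : ∀ t : ℝ, t ^ (N-1) • ((A t)^(N-1) * deriv h t * t^2)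
      = h t ^ (N-1) * deriv h t * t^2 := by
    intro t
    rw [smul_eq_mul, ← htA t, mul_pow]
    ring
  have e2 : (∫ t in Set.Ioi (0:ℝ), t ^ (N-1) • ((A t)^(N-1) * deriv h t * t^2))
      = ∫ t in Set.Ioi (0:ℝ), h t ^ (N-1) * deriv h t * t^2 := by
    simp_rw [e1]
  rw [e2]
  -- restrict to (0,1]
  have hψint : (∫ t in Set.Ioi (0:ℝ), h t ^ (N-1) * deriv h t * t^2)
      = ∫ t in Set.Ioc (0:ℝ) 1, h t ^ (N-1) * deriv h t * t^2 := by
    apply setIntegral_eq_of_subset_of_forall_diff_eq_zero measurableSet_Ioi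
      Set.Ioc_subset_Ioi_self
    intro t ht
    have h1t : 1 < t := by
      rcases ht with ⟨ht0, htn⟩
      by_contra hle
      exact htn ⟨ht0, le_of_not_gt hle⟩
    have hht : h t = 0 := hzero t (fun hc => absurd hc.2 (not_lt.2 h1t.le))
    rw [hht, zero_pow hN1, zero_mul, zero_mul]
  rw [hψint]
  have hIoc : (∫ t in Set.Ioc (0:ℝ) 1, h t ^ (N-1) * deriv h t * t^2)
      = ∫ t in (0:ℝ)..1, h t ^ (N-1) * deriv h t * t^2 :=
    (intervalIntegral.integral_of_le (by norm_num)).symm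
  rw [hIoc]
  -- integration by parts
  have hu : ∀ t ∈ Set.uIcc (0:ℝ) 1, HasDerivAt (fun s : ℝ => s^2) (2 * t) t := by
    intro t _
    simpa using (hasDerivAt_pow 2 t)
  have hv : ∀ t ∈ Set.uIcc (0:ℝ) 1,
      HasDerivAt (fun s : ℝ => h s ^ N) ((N:ℝ) * h t ^ (N-1) * deriv h t) t := by
    intro t _
    exact (hdiff t).hasDerivAt.pow N
  have hu' : IntervalIntegrable (fun t : ℝ => 2 * t) volume 0 1 :=
    (continuous_const.mul continuous_id).intervalIntegrable 0 1
  have hv' : IntervalIntegrable (fun t : ℝ => (N:ℝ) * h t ^ (N-1) * deriv h t) volume 0 1 :=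
    ((continuous_const.mul (hcont.pow _)).mul hderivcont).intervalIntegrable 0 1
  have hibp := intervalIntegral.integral_mul_deriv_eq_deriv_mul hu hv hu' hv'
  have h1z : h 1 = 0 := hzero 1 (by simp)
  have h0z : h 0 = 0 := hzero 0 (by simp)
  have e3 : (∫ t in (0:ℝ)..1, h t ^ (N-1) * deriv h t * t^2)
      = (1/(N:ℝ)) * ∫ t in (0:ℝ)..1, t^2 * ((N:ℝ) * h t ^ (N-1) * deriv h t) := by
    rw [← intervalIntegral.integral_const_mul]
    apply intervalIntegral.integral_congr
    intro t _
    field_simp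
  have e4 : (∫ t in (0:ℝ)..1, 2 * t * h t ^ N) = 2 * ∫ t in (0:ℝ)..1, h t ^ N * t := by
    rw [← intervalIntegral.integral_const_mul]
    apply intervalIntegral.integral_congr
    intro t _
    simp only []
    ring
  rw [e3, hibp, e4, h1z]
  rw [zero_pow (by omega : N ≠ 0)]
  simp only [nsmul_eq_mul, smul_eq_mul]
  field_simp
  rw [measureReal_def]
  ring
end
end

section
/- Let N ≥ 3 and let n be a positive real number. Define u : ℝ^N → ℝ by u(x) = x_N ∏_{i=1}^{N−1} sin²(n xᵢ). Then for every x ∈ ℝ^N, det(D²u)(x) = −(−2)^N n^{2(N−1)} x_N^{N−2} (∏_{i=1}^{N−1} sin(n xᵢ))^{2(N−1)} (Σ_{j=1}^{N−1} cos²(n x_j)). In particular det(D²u) has a constant sign on the half-space {x : x_N > 0}. -/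
open MeasureTheory Real Filter

noncomputable section

/-- The index of the last coordinate (`x_N`) of `ℝ^N`. -/
def lastIdx (N : ℕ) (hN : 0 < N) : Fin N := ⟨N - 1, Nat.sub_lt hN Nat.one_pos⟩

/-- The lacunary sequence `n_ℓ = k^{N^{3ℓ}}`. -/
def nseq (N k l : ℕ) : ℕ := k ^ (N ^ (3 * l))

/-- `∏_{i=1}^{N-1} sin²(n xᵢ)`. -/
def gfun (N : ℕ) (n : ℝ) (x : Eu N) : ℝ :=
  ∏ i : Fin (N-1), (Real.sin (n * x (Fin.castLE (Nat.sub_le N 1) i)))^2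

/-- The atom `f(x) = x_N ∏_{i=1}^{N-1} sin²(n xᵢ)`. -/
def ffun (N : ℕ) (hN : 0 < N) (n : ℝ) (x : Eu N) : ℝ :=
  x (lastIdx N hN) * gfun N n x

/-- `w_k(x) = Σ_{ℓ=1}^k n_ℓ^{-(2-2/N)} ℓ^{-1/N} ∏_{i=1}^{N-1} sin²(n_ℓ xᵢ)`. -/
def wfun (N k : ℕ) (x : Eu N) : ℝ :=
  ∑ l ∈ Finset.Icc 1 k,
    ((nseq N k l : ℝ)) ^ (-(2 - 2/(N:ℝ))) * ((l : ℝ)) ^ (-(1/(N:ℝ))) * gfun N (nseq N k l) x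

/-- `u_k(x) = χ(x) w_k(x) x_N`. -/
def ufun (N : ℕ) (hN : 0 < N) (k : ℕ) (χ : Eu N → ℝ) (x : Eu N) : ℝ :=
  χ x * wfun N k x * x (lastIdx N hN)

/-- The `C²` norm: supremum of all partial derivatives of order `≤ 2`. -/
def C2norm {N : ℕ} (φ : Eu N → ℝ) : ℝ :=
  ⨆ x : Eu N, max |φ x| (max (‖iteratedFDeriv ℝ 1 φ x‖) (‖iteratedFDeriv ℝ 2 φ x‖))

/-- The `C¹` norm: supremum of all partial derivatives of order `≤ 1`. -/
def C1norm {N : ℕ} (φ : Eu N → ℝ) : ℝ :=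
  ⨆ x : Eu N, max |φ x| (‖iteratedFDeriv ℝ 1 φ x‖)

/-- Glue `x̂ ∈ ℝ^{N-1}` and `t ∈ ℝ` into the point `(x̂, t) ∈ ℝ^N`. -/
def glue (N : ℕ) (hN : 0 < N) (xh : Eu (N-1)) (t : ℝ) : Eu N :=
  WithLp.toLp 2 (fun i => if h : (i : ℕ) < N - 1 then xh ⟨i, h⟩ else t)

-- ===== auxiliary lemmas for stmt9 =====
namespace Stmt9Aux

open Matrix Finset Real

/-- Bordered diagonal matrix. -/
def bmat (m : ℕ) (d b c : Fin m → ℝ) : Matrix (Fin (m+1)) (Fin (m+1)) ℝ :=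
  Matrix.of fun i j =>
    if hi : (i : ℕ) < m then
      if hj : (j : ℕ) < m then (if i = j then d ⟨i, hi⟩ else 0) else b ⟨i, hi⟩
    else if hj : (j : ℕ) < m then c ⟨j, hj⟩ else 0

lemma bmat_cast_cast {m : ℕ} (d b c : Fin m → ℝ) (i j : Fin m) :
    bmat m d b c i.castSucc j.castSucc = if i = j then d i else 0 := by
  simp [bmat, i.isLt, j.isLt, Fin.castSucc_inj]

lemma bmat_cast_last {m : ℕ} (d b c : Fin m → ℝ) (i : Fin m) :
    bmat m d b c i.castSucc (Fin.last m) = b i := by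
  simp [bmat, i.isLt]

lemma bmat_last_cast {m : ℕ} (d b c : Fin m → ℝ) (j : Fin m) :
    bmat m d b c (Fin.last m) j.castSucc = c j := by
  simp [bmat, j.isLt]

lemma bmat_last_last {m : ℕ} (d b c : Fin m → ℝ) :
    bmat m d b c (Fin.last m) (Fin.last m) = 0 := by
  simp [bmat]

lemma det_bmat (m : ℕ) (d b c : Fin m → ℝ) :
    (bmat m d b c).det = - ∑ i : Fin m, b i * c i * ∏ j ∈ univ.erase i, d j := by
  classical
  rw [Matrix.det_apply]
  have key : ∀ σ : Equiv.Perm (Fin (m+1)),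
      σ ∉ Finset.univ.image (fun i : Fin m => Equiv.swap i.castSucc (Fin.last m)) →
      Equiv.Perm.sign σ • (∏ i, bmat m d b c (σ i) i) = (0:ℝ) := by
    intro σ hσ
    by_contra h
    apply hσ
    have hprod : ∀ i, bmat m d b c (σ i) i ≠ 0 := by
      intro i hi
      refine h ?_
      rw [show (∏ i, bmat m d b c (σ i) i) = 0 from
        Finset.prod_eq_zero (Finset.mem_univ i) hi, smul_zero]
    have hlast : σ (Fin.last m) ≠ Fin.last m := by
      intro he
      exact hprod (Fin.last m) (by rw [he, bmat_last_last])
    obtain ⟨k, hk⟩ : ∃ k : Fin m, σ (Fin.last m) = k.castSucc := by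
      rcases Fin.eq_castSucc_or_eq_last (σ (Fin.last m)) with ⟨k, hk⟩ | h'
      · exact ⟨k, hk⟩
      · exact absurd h' hlast
    have hinvne : σ.symm (Fin.last m) ≠ Fin.last m := by
      intro he
      apply hlast
      conv_lhs => rw [← he]
      simp
    obtain ⟨k', hk'⟩ : ∃ k' : Fin m, σ.symm (Fin.last m) = k'.castSucc := by
      rcases Fin.eq_castSucc_or_eq_last (σ.symm (Fin.last m)) with ⟨k', hk'⟩ | h'
      · exact ⟨k', hk'⟩
      · exact absurd h' hinvne
    have hk'im : σ k'.castSucc = Fin.last m := by rw [← hk']; simp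
    have hfix : ∀ j : Fin m, j ≠ k' → σ j.castSucc = j.castSucc := by
      intro j hj
      have hne := hprod j.castSucc
      rcases Fin.eq_castSucc_or_eq_last (σ j.castSucc) with ⟨r, hr⟩ | h'
      · rw [hr] at hne ⊢
        rw [bmat_cast_cast] at hne
        have : r = j := by by_contra hrj; simp [hrj] at hne
        rw [this]
      · exfalso
        have := σ.injective (h'.trans hk'im.symm)
        exact hj (Fin.castSucc_injective m this)
    have hkk : k' = k := by
      by_contra hne
      have h1 : σ k.castSucc = k.castSucc := hfix k (fun he => hne he.symm)
      have := σ.injective (hk.trans h1.symm)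
      exact absurd this (Fin.castSucc_lt_last k).ne'
    subst hkk
    refine Finset.mem_image.2 ⟨k', Finset.mem_univ _, ?_⟩
    ext x
    rcases Fin.eq_castSucc_or_eq_last x with ⟨j, rfl⟩ | rfl
    · rcases eq_or_ne j k' with rfl | hj
      · rw [Equiv.swap_apply_left, hk'im]
      · rw [Equiv.swap_apply_of_ne_of_ne (by simpa [Fin.castSucc_inj] using hj)
          (Fin.castSucc_lt_last j).ne, hfix j hj]
    · rw [Equiv.swap_apply_right, hk]
  rw [← Finset.sum_subset (Finset.subset_univ _) (fun σ _ hσ => key σ hσ)]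
  rw [Finset.sum_image (by
    intro a _ b _ hab
    have := congrArg (fun e : Equiv.Perm (Fin (m+1)) => e (Fin.last m)) hab
    simpa [Fin.castSucc_inj] using this)]
  rw [← Finset.sum_neg_distrib]
  refine Finset.sum_congr rfl fun i _ => ?_
  have hsign : Equiv.Perm.sign (Equiv.swap i.castSucc (Fin.last m)) = -1 :=
    Equiv.Perm.sign_swap (Fin.castSucc_lt_last i).ne
  have hprod : (∏ j, bmat m d b c (Equiv.swap i.castSucc (Fin.last m) j) j)
      = b i * c i * ∏ j ∈ univ.erase i, d j := by
    rw [Fin.prod_univ_castSucc]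
    rw [Equiv.swap_apply_right, bmat_cast_last]
    have : ∀ j : Fin m, bmat m d b c (Equiv.swap i.castSucc (Fin.last m) j.castSucc) j.castSucc
        = if j = i then c i else d j := by
      intro j
      rcases eq_or_ne j i with rfl | hj
      · rw [Equiv.swap_apply_left, bmat_last_cast, if_pos rfl]
      · rw [Equiv.swap_apply_of_ne_of_ne (by simpa [Fin.castSucc_inj] using hj)
          (Fin.castSucc_lt_last j).ne, bmat_cast_cast, if_pos rfl, if_neg hj]
    rw [Finset.prod_congr rfl (fun j _ => this j)]
    rw [← Finset.mul_prod_erase Finset.univ _ (Finset.mem_univ i), if_pos rfl]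
    rw [Finset.prod_congr rfl (fun j hj => if_neg (Finset.ne_of_mem_erase hj))]
    ring
  simp [hsign, hprod]

/-- Rank-one plus diagonal, bordered, with zero corner. -/
def amat (m : ℕ) (cc p : ℝ) (w d : Fin m → ℝ) : Matrix (Fin (m+1)) (Fin (m+1)) ℝ :=
  Matrix.of fun i j =>
    if hi : (i : ℕ) < m then
      if hj : (j : ℕ) < m then
        cc * w ⟨i, hi⟩ * w ⟨j, hj⟩ + (if i = j then d ⟨i, hi⟩ else 0)
      else p * w ⟨i, hi⟩
    else if hj : (j : ℕ) < m then p * w ⟨j, hj⟩ else 0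

lemma amat_cast_cast {m : ℕ} (cc p : ℝ) (w d : Fin m → ℝ) (i j : Fin m) :
    amat m cc p w d i.castSucc j.castSucc
      = cc * w i * w j + (if i = j then d i else 0) := by
  simp [amat, i.isLt, j.isLt, Fin.castSucc_inj]

lemma amat_cast_last {m : ℕ} (cc p : ℝ) (w d : Fin m → ℝ) (i : Fin m) :
    amat m cc p w d i.castSucc (Fin.last m) = p * w i := by
  simp [amat, i.isLt]

lemma amat_last_cast {m : ℕ} (cc p : ℝ) (w d : Fin m → ℝ) (j : Fin m) :
    amat m cc p w d (Fin.last m) j.castSucc = p * w j := by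
  simp [amat, j.isLt]

lemma amat_last_last {m : ℕ} (cc p : ℝ) (w d : Fin m → ℝ) :
    amat m cc p w d (Fin.last m) (Fin.last m) = 0 := by
  simp [amat]

lemma det_amat (m : ℕ) (cc p : ℝ) (w d : Fin m → ℝ) :
    (amat m cc p w d).det = - p^2 * ∑ i : Fin m, w i^2 * ∏ j ∈ univ.erase i, d j := by
  classical
  rcases eq_or_ne p 0 with rfl | hp
  · rw [Matrix.det_eq_zero_of_column_eq_zero (Fin.last m)]
    · ring
    · intro i
      simp only [amat, Matrix.of_apply]
      have : ¬ ((Fin.last m : ℕ) < m) := by simp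
      split <;> simp [this]
  · set v : Fin (m+1) → ℝ := fun i => if hi : (i : ℕ) < m then (cc/p) * w ⟨i, hi⟩ else 0
    set e : Fin (m+1) → ℝ := fun j => if j = Fin.last m then 1 else 0
    have hElast : ¬ ((Fin.last m : ℕ) < m) := by simp
    have hmul : amat m cc p w d = (1 + Matrix.replicateCol Unit v * Matrix.replicateRow Unit e) *
        bmat m d (fun i => p * w i) (fun i => p * w i) := by
      ext i j
      rw [Matrix.add_mul, Matrix.one_mul, Matrix.mul_assoc]
      rw [Matrix.add_apply, Matrix.mul_apply]
      have hrow : ∀ k, (Matrix.replicateRow Unit e * bmat m d (fun i => p * w i) (fun i => p * w i)) k j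
          = bmat m d (fun i => p * w i) (fun i => p * w i) (Fin.last m) j := by
        intro k
        rw [Matrix.mul_apply]
        simp only [Matrix.replicateRow_apply, e]
        rw [Finset.sum_eq_single (Fin.last m)]
        · simp
        · intro b _ hb; simp [hb]
        · simp
      simp only [Matrix.mul_apply, Matrix.replicateCol_apply, hrow]
      rw [← Finset.sum_mul, Finset.sum_const, Finset.card_univ]
      simp only [Fintype.card_unit, one_smul]
      simp only [amat, bmat, Matrix.of_apply, v]
      by_cases hi : (i : ℕ) < m
      · by_cases hj : (j : ℕ) < m
        · simp only [dif_pos hi, dif_pos hj, hElast, dite_false]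
          field_simp
          split <;> ring
        · simp only [dif_pos hi, dif_neg hj, hElast]
          simp
      · have hiv : i = Fin.last m := by
          have h2 := i.isLt
          ext
          simp only [Fin.val_last]
          omega
        subst hiv
        simp only [dif_neg hi]
        simp [hElast]
    rw [hmul, Matrix.det_mul, Matrix.det_one_add_replicateCol_mul_replicateRow, det_bmat]
    have hev : e ⬝ᵥ v = 0 := by
      simp only [dotProduct, e, v]
      rw [Finset.sum_eq_single (Fin.last m)]
      · simp [hElast]
      · intro b _ hb; simp [hb]
      · simp
    rw [hev, add_zero, one_mul, Finset.mul_sum, ← Finset.sum_neg_distrib]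
    exact Finset.sum_congr rfl fun i _ => by ring

lemma prod_erase_prod {m : ℕ} (q : Fin m → ℝ) :
    (∏ j : Fin m, ∏ k ∈ univ.erase j, q k) = (∏ k : Fin m, q k) ^ (m - 1) := by
  classical
  calc (∏ j : Fin m, ∏ k ∈ univ.erase j, q k)
      = ∏ j : Fin m, ∏ k : Fin m, (if k = j then 1 else q k) := by
        refine Finset.prod_congr rfl fun j _ => ?_
        rw [← Finset.mul_prod_erase Finset.univ _ (Finset.mem_univ j), if_pos rfl, one_mul]
        exact (Finset.prod_congr rfl fun k hk => by
          rw [if_neg (Finset.ne_of_mem_erase hk)]).symm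
    _ = ∏ k : Fin m, ∏ j : Fin m, (if k = j then 1 else q k) := Finset.prod_comm
    _ = ∏ k : Fin m, q k ^ (m - 1) := by
        refine Finset.prod_congr rfl fun k _ => ?_
        rw [← Finset.mul_prod_erase Finset.univ _ (Finset.mem_univ k), if_pos rfl, one_mul]
        rw [Finset.prod_congr rfl (fun j hj => if_neg (Ne.symm (Finset.ne_of_mem_erase hj)))]
        rw [Finset.prod_const, Finset.card_erase_of_mem (Finset.mem_univ k), Finset.card_univ,
          Fintype.card_fin]
    _ = (∏ k : Fin m, q k) ^ (m - 1) := by rw [Finset.prod_pow]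

end Stmt9Aux

-- ===== calculus auxiliary lemmas =====
namespace Stmt9Calc

open Real

def embN (N : ℕ) : Fin (N-1) → Fin N := Fin.castLE (Nat.sub_le N 1)

variable {N : ℕ} {n : ℝ}

lemma embN_ne_last {hN : 0 < N} (i : Fin (N-1)) : embN N i ≠ lastIdx N hN := by
  intro h
  have h2 := congrArg Fin.val h
  have h3 := i.isLt
  simp only [embN, lastIdx, Fin.coe_castLE] at h2
  omega

lemma embN_inj {i j : Fin (N-1)} (h : embN N i = embN N j) : i = j := by
  simpa [embN, Fin.ext_iff] using h

lemma proj_ebasis (k j : Fin N) :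
    (EuclideanSpace.proj k : Eu N →L[ℝ] ℝ) (ebasis j) = if k = j then 1 else 0 := by
  simp [ebasis, EuclideanSpace.single_apply]

lemma hasFD_coord (k : Fin N) (x : Eu N) :
    HasFDerivAt (fun y : Eu N => y k) (EuclideanSpace.proj k : Eu N →L[ℝ] ℝ) x :=
  (EuclideanSpace.proj k : Eu N →L[ℝ] ℝ).hasFDerivAt

lemma hasFD_sin (n : ℝ) (k : Fin N) (x : Eu N) :
    HasFDerivAt (fun y : Eu N => Real.sin (n * y k))
      ((n * Real.cos (n * x k)) • (EuclideanSpace.proj k : Eu N →L[ℝ] ℝ)) x := by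
  have h1 : HasFDerivAt (fun y : Eu N => n * y k)
      (n • (EuclideanSpace.proj k : Eu N →L[ℝ] ℝ)) x := (hasFD_coord k x).const_mul n
  refine h1.sin.congr_fderiv ?_
  rw [smul_smul, mul_comm]

lemma hasFD_cos (n : ℝ) (k : Fin N) (x : Eu N) :
    HasFDerivAt (fun y : Eu N => Real.cos (n * y k))
      ((-(n * Real.sin (n * x k))) • (EuclideanSpace.proj k : Eu N →L[ℝ] ℝ)) x := by
  have h1 : HasFDerivAt (fun y : Eu N => n * y k)
      (n • (EuclideanSpace.proj k : Eu N →L[ℝ] ℝ)) x := (hasFD_coord k x).const_mul n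
  refine h1.cos.congr_fderiv ?_
  rw [smul_smul, show -Real.sin (n * x k) * n = -(n * Real.sin (n * x k)) from by ring]

lemma hasFD_sinsq (n : ℝ) (k : Fin N) (x : Eu N) :
    HasFDerivAt (fun y : Eu N => Real.sin (n * y k) ^ 2)
      ((2 * n * Real.sin (n * x k) * Real.cos (n * x k)) •
        (EuclideanSpace.proj k : Eu N →L[ℝ] ℝ)) x := by
  have hfun : (fun y : Eu N => Real.sin (n * y k) ^ 2)
      = fun y : Eu N => Real.sin (n * y k) * Real.sin (n * y k) := by
    funext y; ring
  rw [hfun]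
  refine ((hasFD_sin n k x).mul (hasFD_sin n k x)).congr_fderiv ?_
  rw [← add_smul, smul_smul, show (Real.sin (n*x k) + Real.sin (n*x k))*(n*Real.cos (n*x k))
    = 2*n*Real.sin (n*x k)*Real.cos (n*x k) from by ring]

lemma hasFD_prod (x : Eu N) (u : Finset (Fin (N-1))) :
    HasFDerivAt (fun y : Eu N => ∏ i ∈ u, Real.sin (n * y (embN N i)) ^ 2)
      (∑ i ∈ u, (∏ j ∈ u.erase i, Real.sin (n * x (embN N j)) ^ 2) •
        ((2 * n * Real.sin (n * x (embN N i)) * Real.cos (n * x (embN N i))) •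
          (EuclideanSpace.proj (embN N i) : Eu N →L[ℝ] ℝ))) x := by
  classical
  exact HasFDerivAt.finset_prod (fun i _ => hasFD_sinsq n (embN N i) x)

lemma hasFD_gfun (x : Eu N) :
    HasFDerivAt (gfun N n)
      (∑ i : Fin (N-1), ((∏ j ∈ Finset.univ.erase i, Real.sin (n * x (embN N j)) ^ 2) *
          (2 * n * Real.sin (n * x (embN N i)) * Real.cos (n * x (embN N i)))) •
        (EuclideanSpace.proj (embN N i) : Eu N →L[ℝ] ℝ)) x := by
  refine (hasFD_prod (n := n) x Finset.univ).congr_fderiv ?_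
  exact Finset.sum_congr rfl fun i _ => (smul_smul _ _ _)

lemma hasFD_ffun (hN : 0 < N) (x : Eu N) :
    HasFDerivAt (ffun N hN n)
      (gfun N n x • (EuclideanSpace.proj (lastIdx N hN) : Eu N →L[ℝ] ℝ) +
        ∑ i : Fin (N-1),
          (x (lastIdx N hN) * ((∏ j ∈ Finset.univ.erase i, Real.sin (n * x (embN N j)) ^ 2) *
            (2 * n * Real.sin (n * x (embN N i)) * Real.cos (n * x (embN N i))))) •
          (EuclideanSpace.proj (embN N i) : Eu N →L[ℝ] ℝ)) x := by
  refine ((hasFD_coord (lastIdx N hN) x).mul (hasFD_gfun x)).congr_fderiv ?_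
  rw [add_comm]
  congr 1
  rw [Finset.smul_sum]
  exact Finset.sum_congr rfl fun i _ => (smul_smul _ _ _)

lemma pd_ffun_last (hN : 0 < N) (y : Eu N) :
    pd (ffun N hN n) (lastIdx N hN) y = gfun N n y := by
  unfold pd
  rw [(hasFD_ffun hN y).fderiv]
  simp only [ContinuousLinearMap.add_apply, ContinuousLinearMap.smul_apply,
    ContinuousLinearMap.sum_apply, proj_ebasis, smul_eq_mul]
  rw [Finset.sum_eq_zero (fun i _ => by rw [if_neg (embN_ne_last i), mul_zero])]
  simp

lemma pd_ffun_emb (hN : 0 < N) (i : Fin (N-1)) (y : Eu N) :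
    pd (ffun N hN n) (embN N i) y =
      y (lastIdx N hN) * ((∏ j ∈ Finset.univ.erase i, Real.sin (n * y (embN N j)) ^ 2) *
        (2 * n * Real.sin (n * y (embN N i)) * Real.cos (n * y (embN N i)))) := by
  unfold pd
  rw [(hasFD_ffun hN y).fderiv]
  simp only [ContinuousLinearMap.add_apply, ContinuousLinearMap.smul_apply,
    ContinuousLinearMap.sum_apply, proj_ebasis, smul_eq_mul]
  rw [if_neg (fun h => embN_ne_last i h.symm),
    Finset.sum_eq_single i
      (fun b _ hb => by rw [if_neg (fun h => hb (embN_inj h)), mul_zero])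
      (fun h => absurd (Finset.mem_univ i) h)]
  simp

section second
variable (hN : 0 < N)

lemma inner_last (hN : 0 < N) :
    (fun y : Eu N => fderiv ℝ (ffun N hN n) y (ebasis (lastIdx N hN))) = gfun N n :=
  funext fun y => pd_ffun_last hN y

lemma inner_emb (hN : 0 < N) (j : Fin (N-1)) :
    (fun y : Eu N => fderiv ℝ (ffun N hN n) y (ebasis (embN N j))) =
      fun y : Eu N => y (lastIdx N hN) *
        ((∏ l ∈ Finset.univ.erase j, Real.sin (n * y (embN N l)) ^ 2) *
          (2 * n * Real.sin (n * y (embN N j)) * Real.cos (n * y (embN N j)))) :=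
  funext fun y => pd_ffun_emb hN j y

lemma pd2_last_last (x : Eu N) :
    pd2 (ffun N hN n) (lastIdx N hN) (lastIdx N hN) x = 0 := by
  unfold pd2
  rw [inner_last hN, (hasFD_gfun x).fderiv]
  simp only [ContinuousLinearMap.sum_apply, ContinuousLinearMap.smul_apply, proj_ebasis,
    smul_eq_mul]
  exact Finset.sum_eq_zero fun i _ => by rw [if_neg (embN_ne_last i), mul_zero]

lemma pd2_emb_last (i : Fin (N-1)) (x : Eu N) :
    pd2 (ffun N hN n) (embN N i) (lastIdx N hN) x =
      (∏ j ∈ Finset.univ.erase i, Real.sin (n * x (embN N j)) ^ 2) *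
        (2 * n * Real.sin (n * x (embN N i)) * Real.cos (n * x (embN N i))) := by
  unfold pd2
  rw [inner_last hN, (hasFD_gfun x).fderiv]
  simp only [ContinuousLinearMap.sum_apply, ContinuousLinearMap.smul_apply, proj_ebasis,
    smul_eq_mul]
  rw [Finset.sum_eq_single i
    (fun b _ hb => by rw [if_neg (fun h => hb (embN_inj h)), mul_zero])
    (fun h => absurd (Finset.mem_univ i) h)]
  simp

lemma pd2_last_emb (j : Fin (N-1)) (x : Eu N) :
    pd2 (ffun N hN n) (lastIdx N hN) (embN N j) x =
      (∏ l ∈ Finset.univ.erase j, Real.sin (n * x (embN N l)) ^ 2) *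
        (2 * n * Real.sin (n * x (embN N j)) * Real.cos (n * x (embN N j))) := by
  unfold pd2
  rw [inner_emb hN j]
  have hphi := (hasFD_coord (lastIdx N hN) x).mul
    ((hasFD_prod (n := n) x (Finset.univ.erase j)).mul
      (((hasFD_sin n (embN N j) x).const_mul (2*n)).mul (hasFD_cos n (embN N j) x)))
  erw [hphi.fderiv]
  simp only [ContinuousLinearMap.add_apply, ContinuousLinearMap.smul_apply,
    ContinuousLinearMap.sum_apply, proj_ebasis, smul_eq_mul, Pi.mul_apply]
  rw [Finset.sum_eq_zero (fun b _ => by rw [if_neg (embN_ne_last b)]; ring)]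
  rw [if_neg (embN_ne_last j), if_pos trivial]
  ring

lemma pd2_emb_emb_diag (j : Fin (N-1)) (x : Eu N) :
    pd2 (ffun N hN n) (embN N j) (embN N j) x =
      x (lastIdx N hN) * ((∏ l ∈ Finset.univ.erase j, Real.sin (n * x (embN N l)) ^ 2) *
        (2 * n^2 * (Real.cos (n * x (embN N j))^2 - Real.sin (n * x (embN N j))^2))) := by
  unfold pd2
  rw [inner_emb hN j]
  have hphi := (hasFD_coord (lastIdx N hN) x).mul
    ((hasFD_prod (n := n) x (Finset.univ.erase j)).mul
      (((hasFD_sin n (embN N j) x).const_mul (2*n)).mul (hasFD_cos n (embN N j) x)))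
  erw [hphi.fderiv]
  simp only [ContinuousLinearMap.add_apply, ContinuousLinearMap.smul_apply,
    ContinuousLinearMap.sum_apply, proj_ebasis, smul_eq_mul]
  rw [Finset.sum_eq_zero (fun b hb => by
    rw [if_neg (fun h => (Finset.ne_of_mem_erase hb) (embN_inj h))]; ring)]
  rw [if_pos trivial, if_neg (Ne.symm (embN_ne_last j))]
  ring

lemma pd2_emb_emb_off (i j : Fin (N-1)) (hij : i ≠ j) (x : Eu N) :
    pd2 (ffun N hN n) (embN N i) (embN N j) x =
      x (lastIdx N hN) * ((∏ l ∈ (Finset.univ.erase j).erase i, Real.sin (n * x (embN N l)) ^ 2) *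
        (2 * n * Real.sin (n * x (embN N i)) * Real.cos (n * x (embN N i))) *
        (2 * n * Real.sin (n * x (embN N j)) * Real.cos (n * x (embN N j)))) := by
  unfold pd2
  rw [inner_emb hN j]
  have hphi := (hasFD_coord (lastIdx N hN) x).mul
    ((hasFD_prod (n := n) x (Finset.univ.erase j)).mul
      (((hasFD_sin n (embN N j) x).const_mul (2*n)).mul (hasFD_cos n (embN N j) x)))
  erw [hphi.fderiv]
  simp only [ContinuousLinearMap.add_apply, ContinuousLinearMap.smul_apply,
    ContinuousLinearMap.sum_apply, proj_ebasis, smul_eq_mul, Pi.mul_apply]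
  rw [Finset.sum_eq_single i
    (fun b _ hb => by rw [if_neg (fun h => hb (embN_inj h))]; ring)
    (fun h => absurd (Finset.mem_erase.2 ⟨hij, Finset.mem_univ i⟩) h)]
  rw [if_pos rfl, if_neg (show embN N j = embN N i → False from fun h => hij (embN_inj h).symm),
    if_neg (Ne.symm (embN_ne_last i))]
  ring

end second
end Stmt9Calc

section Main

open Real Finset Stmt9Calc Stmt9Aux

variable {N : ℕ} {n : ℝ}

lemma hess_formula (hN : 0 < N) (hN3 : 3 ≤ N) (x : Eu N) :
    hessDet (ffun N hN n) x =
      -((-2:ℝ)^N) * n^(2*(N-1)) * (x (lastIdx N hN))^(N-2) *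
        (∏ i : Fin (N-1), Real.sin (n * x (embN N i)))^(2*(N-1)) *
        ∑ j : Fin (N-1), (Real.cos (n * x (embN N j)))^2 := by
  classical
  have hNm : (N-1) + 1 = N := by omega
  have hcast : ∀ i : Fin (N-1), (finCongr hNm) i.castSucc = embN N i := by
    intro i; ext; simp [embN]
  have hlastc : (finCongr hNm) (Fin.last (N-1)) = lastIdx N hN := by
    ext; simp [lastIdx]
  have hsub : (Matrix.of fun i j => pd2 (ffun N hN n) i j x).submatrix
        (finCongr hNm) (finCongr hNm)
      = amat (N-1) (4*n^2*(x (lastIdx N hN)))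
          (2*n*(∏ k : Fin (N-1), Real.sin (n * x (embN N k))))
          (fun i => Real.cos (n * x (embN N i)) *
            ∏ j ∈ Finset.univ.erase i, Real.sin (n * x (embN N j)))
          (fun i => -(2*n^2*(x (lastIdx N hN)) *
            (∏ j ∈ Finset.univ.erase i, Real.sin (n * x (embN N j)))^2)) := by
    ext i j
    rcases Fin.eq_castSucc_or_eq_last i with ⟨i', rfl⟩ | rfl <;>
      rcases Fin.eq_castSucc_or_eq_last j with ⟨j', rfl⟩ | rfl
    · rw [Matrix.submatrix_apply, hcast, hcast, Matrix.of_apply, amat_cast_cast]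
      rcases eq_or_ne i' j' with rfl | hij
      · rw [pd2_emb_emb_diag hN i' x, if_pos rfl]
        have hPy := Real.sin_sq_add_cos_sq (n * x (embN N i'))
        have hPP : (∏ j ∈ Finset.univ.erase i', Real.sin (n * x (embN N j)) ^ 2)
            = (∏ j ∈ Finset.univ.erase i', Real.sin (n * x (embN N j)))^2 :=
          Finset.prod_pow _ _ _
        rw [hPP]
        linear_combination (-(2*n^2*(x (lastIdx N hN)) *
          (∏ j ∈ Finset.univ.erase i', Real.sin (n * x (embN N j)))^2)) * hPy
      · rw [pd2_emb_emb_off hN i' j' hij x, if_neg hij, add_zero]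
        have h1 : (∏ l ∈ Finset.univ.erase j', Real.sin (n * x (embN N l)))
            = Real.sin (n * x (embN N i')) *
              ∏ l ∈ (Finset.univ.erase j').erase i', Real.sin (n * x (embN N l)) :=
          (Finset.mul_prod_erase _ _ (Finset.mem_erase.2 ⟨hij, Finset.mem_univ i'⟩)).symm
        have h2 : (∏ l ∈ Finset.univ.erase i', Real.sin (n * x (embN N l)))
            = Real.sin (n * x (embN N j')) *
              ∏ l ∈ (Finset.univ.erase j').erase i', Real.sin (n * x (embN N l)) := by
          rw [show (Finset.univ.erase j').erase i' = (Finset.univ.erase i').erase j' from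
            Finset.erase_right_comm]
          exact (Finset.mul_prod_erase _ _
            (Finset.mem_erase.2 ⟨Ne.symm hij, Finset.mem_univ j'⟩)).symm
        have hQ : (∏ l ∈ (Finset.univ.erase j').erase i', Real.sin (n * x (embN N l)) ^ 2)
            = (∏ l ∈ (Finset.univ.erase j').erase i', Real.sin (n * x (embN N l)))^2 :=
          Finset.prod_pow _ _ _
        rw [hQ, h1, h2]; ring
    · rw [Matrix.submatrix_apply, hcast, hlastc, Matrix.of_apply, amat_cast_last]
      rw [pd2_emb_last hN i' x]
      have ha : (∏ k : Fin (N-1), Real.sin (n * x (embN N k)))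
          = Real.sin (n * x (embN N i')) *
            ∏ j ∈ Finset.univ.erase i', Real.sin (n * x (embN N j)) :=
        (Finset.mul_prod_erase _ _ (Finset.mem_univ i')).symm
      have hPP : (∏ j ∈ Finset.univ.erase i', Real.sin (n * x (embN N j)) ^ 2)
          = (∏ j ∈ Finset.univ.erase i', Real.sin (n * x (embN N j)))^2 :=
        Finset.prod_pow _ _ _
      rw [hPP, ha]; ring
    · rw [Matrix.submatrix_apply, hlastc, hcast, Matrix.of_apply, amat_last_cast]
      rw [pd2_last_emb hN j' x]
      have ha : (∏ k : Fin (N-1), Real.sin (n * x (embN N k)))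
          = Real.sin (n * x (embN N j')) *
            ∏ l ∈ Finset.univ.erase j', Real.sin (n * x (embN N l)) :=
        (Finset.mul_prod_erase _ _ (Finset.mem_univ j')).symm
      have hPP : (∏ l ∈ Finset.univ.erase j', Real.sin (n * x (embN N l)) ^ 2)
          = (∏ l ∈ Finset.univ.erase j', Real.sin (n * x (embN N l)))^2 :=
        Finset.prod_pow _ _ _
      rw [hPP, ha]; ring
    · rw [Matrix.submatrix_apply, hlastc, Matrix.of_apply, amat_last_last]
      exact pd2_last_last hN x
  have hdet : hessDet (ffun N hN n) x
      = (amat (N-1) (4*n^2*(x (lastIdx N hN)))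
          (2*n*(∏ k : Fin (N-1), Real.sin (n * x (embN N k))))
          (fun i => Real.cos (n * x (embN N i)) *
            ∏ j ∈ Finset.univ.erase i, Real.sin (n * x (embN N j)))
          (fun i => -(2*n^2*(x (lastIdx N hN)) *
            (∏ j ∈ Finset.univ.erase i, Real.sin (n * x (embN N j)))^2))).det := by
    rw [← hsub, hessDet, Matrix.det_submatrix_equiv_self]
  rw [hdet, det_amat]
  -- now pure algebra
  set t : ℝ := x (lastIdx N hN) with ht
  set a : ℝ := ∏ k : Fin (N-1), Real.sin (n * x (embN N k)) with ha
  set Sc : ℝ := ∑ j : Fin (N-1), (Real.cos (n * x (embN N j)))^2 with hSc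
  have hterm : ∀ i : Fin (N-1),
      (Real.cos (n * x (embN N i)) * ∏ j ∈ Finset.univ.erase i, Real.sin (n * x (embN N j)))^2 *
        ∏ j ∈ Finset.univ.erase i,
          (-(2*n^2*t*(∏ k ∈ Finset.univ.erase j, Real.sin (n * x (embN N k)))^2))
      = (Real.cos (n * x (embN N i)))^2 *
          ((-(2*n^2*t))^(N-1-1) * (a^(N-1-1))^2) := by
    intro i
    have e1 : (∏ j ∈ Finset.univ.erase i,
        (-(2*n^2*t*(∏ k ∈ Finset.univ.erase j, Real.sin (n * x (embN N k)))^2)))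
        = (-(2*n^2*t))^(N-1-1) *
          ∏ j ∈ Finset.univ.erase i,
            (∏ k ∈ Finset.univ.erase j, Real.sin (n * x (embN N k)))^2 := by
      rw [Finset.prod_congr rfl (fun j _ =>
        show (-(2*n^2*t*(∏ k ∈ Finset.univ.erase j, Real.sin (n * x (embN N k)))^2))
          = (-(2*n^2*t)) * (∏ k ∈ Finset.univ.erase j, Real.sin (n * x (embN N k)))^2
          from by ring)]
      rw [Finset.prod_mul_distrib, Finset.prod_const,
        Finset.card_erase_of_mem (Finset.mem_univ i), Finset.card_univ, Fintype.card_fin]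
    rw [e1]
    have e2 : (∏ j ∈ Finset.univ.erase i, Real.sin (n * x (embN N j)))^2 *
        ∏ j ∈ Finset.univ.erase i,
          (∏ k ∈ Finset.univ.erase j, Real.sin (n * x (embN N k)))^2
        = ∏ j : Fin (N-1), (∏ k ∈ Finset.univ.erase j, Real.sin (n * x (embN N k)))^2 :=
      Finset.mul_prod_erase Finset.univ
        (fun j => (∏ k ∈ Finset.univ.erase j, Real.sin (n * x (embN N k)))^2)
        (Finset.mem_univ i)
    have e3 : (∏ j : Fin (N-1), (∏ k ∈ Finset.univ.erase j, Real.sin (n * x (embN N k)))^2)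
        = (a^(N-1-1))^2 := by
      rw [Finset.prod_pow, prod_erase_prod, ha]
    calc (Real.cos (n * x (embN N i)) *
          ∏ j ∈ Finset.univ.erase i, Real.sin (n * x (embN N j)))^2 *
          ((-(2*n^2*t))^(N-1-1) *
            ∏ j ∈ Finset.univ.erase i,
              (∏ k ∈ Finset.univ.erase j, Real.sin (n * x (embN N k)))^2)
        = (Real.cos (n * x (embN N i)))^2 * ((-(2*n^2*t))^(N-1-1) *
            ((∏ j ∈ Finset.univ.erase i, Real.sin (n * x (embN N j)))^2 *
              ∏ j ∈ Finset.univ.erase i,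
                (∏ k ∈ Finset.univ.erase j, Real.sin (n * x (embN N k)))^2)) := by ring
      _ = _ := by rw [e2, e3]
  rw [Finset.sum_congr rfl (fun i _ => hterm i), ← Finset.sum_mul, ← hSc]
  -- exponent juggling
  have hNsub : N - 1 - 1 = N - 2 := by omega
  rw [hNsub]
  have p1 : ((-2:ℝ))^N = ((-2:ℝ)^(N-2))*4 := by
    conv_lhs => rw [show N = (N-2)+2 from by omega]
    rw [pow_add]; norm_num
  have p6 : ((-2:ℝ))^(N-2) = (-1:ℝ)^(N-2) * 2^(N-2) := by
    rw [show (-2:ℝ) = -(2:ℝ) from by norm_num, neg_pow]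
  have p2 : (n:ℝ)^(2*(N-1)) = n^(2*(N-2))*n^2 := by
    rw [show 2*(N-1) = 2*(N-2)+2 from by omega, pow_add]
  have p3 : a^(2*(N-1)) = a^(2*(N-2))*a^2 := by
    rw [show 2*(N-1) = 2*(N-2)+2 from by omega, pow_add]
  have p4 : (a^(N-2))^2 = a^(2*(N-2)) := by
    rw [← pow_mul, show (N-2)*2 = 2*(N-2) from by omega]
  have p5 : (-(2*n^2*t))^(N-2)
      = (-1:ℝ)^(N-2) * (2^(N-2) * (n^(2*(N-2)) * t^(N-2))) := by
    rw [neg_pow, mul_pow, mul_pow, ← pow_mul]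
    ring
  rw [p1, p6, p2, p3, p4, p5]
  ring

end Main


/-- The explicit Hessian determinant of the atom `u(x) = x_N ∏_{i=1}^{N-1} sin²(n xᵢ)`;
in particular it has constant sign on the half-space `{x : x_N > 0}`. -/
theorem stmt9 (N : ℕ) (hN : 3 ≤ N) (n : ℝ) (hn : 0 < n)
    (u : Eu N → ℝ) (hu : ∀ x : Eu N, u x = ffun N (by omega) n x) :
    (∀ x : Eu N, hessDet u x =
      -((-2 : ℝ)^N) * n^(2*(N-1)) * (x (lastIdx N (by omega)))^(N-2) *
        (∏ i : Fin (N-1), Real.sin (n * x (Fin.castLE (Nat.sub_le N 1) i)))^(2*(N-1)) *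
        ∑ j : Fin (N-1), (Real.cos (n * x (Fin.castLE (Nat.sub_le N 1) j)))^2) ∧
    (∀ x y : Eu N, 0 < x (lastIdx N (by omega)) → 0 < y (lastIdx N (by omega)) →
      0 ≤ hessDet u x * hessDet u y) := by
  have h0 : 0 < N := by omega
  have huf : u = ffun N h0 n := funext hu
  constructor
  · intro x
    rw [huf]
    exact hess_formula h0 hN x
  · intro x y hx hy
    rw [huf]
    have k1 := hess_formula (n := n) h0 hN x
    have k2 := hess_formula (n := n) h0 hN y
    rw [k1, k2]
    have hre : (-((-2:ℝ)^N) * n^(2*(N-1)) * (x (lastIdx N h0))^(N-2) *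
        (∏ i : Fin (N-1), Real.sin (n * x (Stmt9Calc.embN N i)))^(2*(N-1)) *
        ∑ j : Fin (N-1), (Real.cos (n * x (Stmt9Calc.embN N j)))^2) *
        (-((-2:ℝ)^N) * n^(2*(N-1)) * (y (lastIdx N h0))^(N-2) *
        (∏ i : Fin (N-1), Real.sin (n * y (Stmt9Calc.embN N i)))^(2*(N-1)) *
        ∑ j : Fin (N-1), (Real.cos (n * y (Stmt9Calc.embN N j)))^2)
      = ((-((-2:ℝ)^N) * n^(2*(N-1)))^2) *
        (((x (lastIdx N h0))^(N-2) *
          (∏ i : Fin (N-1), Real.sin (n * x (Stmt9Calc.embN N i)))^(2*(N-1)) *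
          ∑ j : Fin (N-1), (Real.cos (n * x (Stmt9Calc.embN N j)))^2) *
         ((y (lastIdx N h0))^(N-2) *
          (∏ i : Fin (N-1), Real.sin (n * y (Stmt9Calc.embN N i)))^(2*(N-1)) *
          ∑ j : Fin (N-1), (Real.cos (n * y (Stmt9Calc.embN N j)))^2)) := by ring
    rw [hre]
    have keynn : ∀ z : Eu N, 0 < z (lastIdx N h0) →
        0 ≤ (z (lastIdx N h0))^(N-2) *
          (∏ i : Fin (N-1), Real.sin (n * z (Stmt9Calc.embN N i)))^(2*(N-1)) *
          ∑ j : Fin (N-1), (Real.cos (n * z (Stmt9Calc.embN N j)))^2 := by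
      intro z hz
      apply mul_nonneg
      apply mul_nonneg
      · exact pow_nonneg hz.le _
      · rw [pow_mul]
        exact pow_nonneg (sq_nonneg _) _
      · exact Finset.sum_nonneg fun j _ => sq_nonneg _
    exact mul_nonneg (sq_nonneg _) (mul_nonneg (keynn x hx) (keynn y hy))
end
end

section
/- Fix N ≥ 3 and an integer k ≥ 2, set n_ℓ = k^{N^{3ℓ}} and f_ℓ(x) = x_N ∏_{i=1}^{N−1} sin²(n_ℓ xᵢ). Let 𝓵 = (ℓ₁,…,ℓ_N) ∈ {1,…,k}^N have not all entries equal, let H_𝓵(x) be the N×N matrix with (i,j) entry ∂ᵢ∂ⱼ f_{ℓᵢ}(x), set ℓ* = max_i ℓᵢ, I = {i : ℓᵢ = ℓ*}, and m = #I. Then for every subset J ⊆ {1,…,N} with #J = m and #(I ∩ J) ≤ m − 2, and for every x ∈ ℝ^N, det(H_𝓵^{(I,J)}(x)) = 0, where H_𝓵^{(I,J)} denotes the m×m submatrix of H_𝓵 with rows indexed by I and columns indexed by J. -/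
open MeasureTheory Real Filter

noncomputable section

namespace Aux

variable {N : ℕ} (hN : 0 < N) (n : ℝ)

def cI {N : ℕ} (t : Fin (N-1)) : Fin N := Fin.castLE (Nat.sub_le N 1) t

lemma cI_ne_last (t : Fin (N-1)) : cI t ≠ lastIdx N hN := by
  intro h
  have : (t : ℕ) = N - 1 := congrArg Fin.val h
  omega

lemma cI_inj : Function.Injective (cI (N := N)) := fun a b h => by
  simpa [cI, Fin.ext_iff] using h

lemma eq_last_or_cI (i : Fin N) : i = lastIdx N hN ∨ ∃ t, i = cI t := by
  by_cases h : (i : ℕ) < N - 1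
  · exact Or.inr ⟨⟨i, h⟩, rfl⟩
  · exact Or.inl (Fin.ext (by have := i.2; simp [lastIdx]; omega))

/-- coordinate factor -/
def Sf (t : Fin (N-1)) (x : Eu N) : ℝ := Real.sin (n * x (cI t)) ^ 2

/-- its derivative coefficient -/
def df (t : Fin (N-1)) (x : Eu N) : ℝ := Real.sin (2 * (n * x (cI t))) * n

lemma Sf_eq_zero_of_df {t : Fin (N-1)} {x : Eu N} (h : Sf n t x = 0) : df n t x = 0 := by
  simp only [Sf, df, Real.sin_two_mul] at *
  rcases pow_eq_zero_iff (n := 2) (by norm_num) |>.mp h with h'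
  rw [h']; ring

lemma proj_ebasis (i j : Fin N) :
    (EuclideanSpace.proj i : Eu N →L[ℝ] ℝ) (ebasis j) = if i = j then 1 else 0 := by
  simp [ebasis, EuclideanSpace.single_apply, eq_comm]

lemma hasS (t : Fin (N-1)) (x : Eu N) :
    HasFDerivAt (Sf n t) ((df n t x) • (EuclideanSpace.proj (cI t) : Eu N →L[ℝ] ℝ)) x := by
  have h1 : HasFDerivAt (fun y : Eu N => n * y (cI t))
      (n • (EuclideanSpace.proj (cI t) : Eu N →L[ℝ] ℝ)) x := by
    simpa using ((EuclideanSpace.proj (cI t) : Eu N →L[ℝ] ℝ).hasFDerivAt (x := x)).const_mul n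
  have h2 : HasDerivAt (fun s : ℝ => Real.sin s ^ 2)
      (2 * Real.sin (n * x (cI t)) ^ 1 * Real.cos (n * x (cI t))) (n * x (cI t)) :=
    (Real.hasDerivAt_sin _).pow 2
  have h3 := h2.comp_hasFDerivAt x h1
  rw [smul_smul] at h3
  have he : (2 * Real.sin (n * x (cI t)) ^ 1 * Real.cos (n * x (cI t))) * n = df n t x := by
    rw [df, Real.sin_two_mul]; ring
  rw [he] at h3
  show HasFDerivAt (fun y : Eu N => Real.sin (n * y (cI t)) ^ 2) _ x
  exact h3


def Pf (t : Fin (N-1)) (x : Eu N) : ℝ := ∏ s ∈ Finset.univ.erase t, Sf n s x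

/-- derivative of gfun -/
def Dg (x : Eu N) : Eu N →L[ℝ] ℝ :=
  ∑ t : Fin (N-1), (Pf n t x * df n t x) • (EuclideanSpace.proj (cI t) : Eu N →L[ℝ] ℝ)

lemma gfun_eq (x : Eu N) : gfun N n x = ∏ t : Fin (N-1), Sf n t x := rfl

lemma hasG (x : Eu N) : HasFDerivAt (gfun N n) (Dg n x) x := by
  have h := HasFDerivAt.finset_prod (u := Finset.univ) (g := fun t => Sf n t)
    (g' := fun t => (df n t x) • (EuclideanSpace.proj (cI t) : Eu N →L[ℝ] ℝ))
    (fun t _ => hasS n t x)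
  have : HasFDerivAt (gfun N n)
      (∑ t : Fin (N-1), (∏ s ∈ Finset.univ.erase t, Sf n s x) •
        ((df n t x) • (EuclideanSpace.proj (cI t) : Eu N →L[ℝ] ℝ))) x := h
  simpa [Dg, Pf, smul_smul] using this

/-- derivative of ffun -/
def Dfn (x : Eu N) : Eu N →L[ℝ] ℝ :=
  x (lastIdx N hN) • Dg n x
    + gfun N n x • (EuclideanSpace.proj (lastIdx N hN) : Eu N →L[ℝ] ℝ)

lemma hasF (x : Eu N) : HasFDerivAt (ffun N hN n) (Dfn hN n x) x := by
  have hL : HasFDerivAt (fun y : Eu N => y (lastIdx N hN))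
      (EuclideanSpace.proj (lastIdx N hN) : Eu N →L[ℝ] ℝ) x :=
    (EuclideanSpace.proj (lastIdx N hN) : Eu N →L[ℝ] ℝ).hasFDerivAt
  exact hL.mul (hasG n x)

lemma fderiv_f (x : Eu N) : fderiv ℝ (ffun N hN n) x = Dfn hN n x := (hasF hN n x).fderiv

/-- first partial in direction L -/
lemma D1_last : (fun y : Eu N => fderiv ℝ (ffun N hN n) y (ebasis (lastIdx N hN)))
    = gfun N n := by
  funext y
  rw [fderiv_f hN n y]
  simp only [Dfn, Dg, ContinuousLinearMap.add_apply, ContinuousLinearMap.smul_apply,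
    ContinuousLinearMap.coe_sum', Finset.sum_apply, proj_ebasis]
  rw [Finset.sum_eq_zero (fun t _ => by
    rw [if_neg (cI_ne_last hN t)]; simp)]
  simp

/-- first partial in direction c t₀ -/
lemma D1_cI (t₀ : Fin (N-1)) :
    (fun y : Eu N => fderiv ℝ (ffun N hN n) y (ebasis (cI t₀)))
    = fun y => y (lastIdx N hN) * (Pf n t₀ y * df n t₀ y) := by
  funext y
  rw [fderiv_f hN n y]
  simp only [Dfn, Dg, ContinuousLinearMap.add_apply, ContinuousLinearMap.smul_apply,
    ContinuousLinearMap.coe_sum', Finset.sum_apply]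
  rw [proj_ebasis, if_neg (Ne.symm (cI_ne_last hN t₀))]
  rw [Finset.sum_eq_single t₀ (fun t _ ht => by
      rw [proj_ebasis, if_neg (fun h => ht (cI_inj h))]; simp)
    (fun h => absurd (Finset.mem_univ t₀) h)]
  rw [proj_ebasis, if_pos rfl]
  simp [smul_eq_mul]


def DP (t₀ : Fin (N-1)) (x : Eu N) : Eu N →L[ℝ] ℝ :=
  ∑ s ∈ Finset.univ.erase t₀,
    ((∏ r ∈ (Finset.univ.erase t₀).erase s, Sf n r x) * df n s x) •
      (EuclideanSpace.proj (cI s) : Eu N →L[ℝ] ℝ)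

lemma hasP (t₀ : Fin (N-1)) (x : Eu N) : HasFDerivAt (Pf n t₀) (DP n t₀ x) x := by
  have h := HasFDerivAt.finset_prod (u := Finset.univ.erase t₀) (g := fun t => Sf n t)
    (g' := fun t => (df n t x) • (EuclideanSpace.proj (cI t) : Eu N →L[ℝ] ℝ))
    (fun t _ => hasS n t x)
  have : HasFDerivAt (Pf n t₀)
      (∑ s ∈ Finset.univ.erase t₀, (∏ r ∈ (Finset.univ.erase t₀).erase s, Sf n r x) •
        ((df n s x) • (EuclideanSpace.proj (cI s) : Eu N →L[ℝ] ℝ))) x := h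
  simpa [DP, smul_smul] using this

lemma hasd (t₀ : Fin (N-1)) (x : Eu N) :
    ∃ κ : ℝ, HasFDerivAt (df n t₀) (κ • (EuclideanSpace.proj (cI t₀) : Eu N →L[ℝ] ℝ)) x := by
  have h1 : HasFDerivAt (fun y : Eu N => 2 * (n * y (cI t₀)))
      ((2 * n) • (EuclideanSpace.proj (cI t₀) : Eu N →L[ℝ] ℝ)) x := by
    have := ((EuclideanSpace.proj (cI t₀) : Eu N →L[ℝ] ℝ).hasFDerivAt (x := x)).const_mul (2 * n)
    refine HasFDerivAt.congr_of_eventuallyEq this (Filter.Eventually.of_forall fun y => by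
      show 2 * (n * y (cI t₀)) = 2 * n * y (cI t₀); ring)
  have h2 := (Real.hasDerivAt_sin (2 * (n * x (cI t₀)))).comp_hasFDerivAt x h1
  have h3 := h2.mul_const n
  refine ⟨n * (Real.cos (2 * (n * x (cI t₀))) * (2 * n)), ?_⟩
  show HasFDerivAt (fun y : Eu N => Real.sin (2 * (n * y (cI t₀))) * n) _ x
  simpa [df, Function.comp, smul_smul, mul_assoc] using h3

lemma pd2_cI_last (s₀ : Fin (N-1)) (x : Eu N) :
    pd2 (ffun N hN n) (cI s₀) (lastIdx N hN) x = Pf n s₀ x * df n s₀ x := by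
  unfold pd2
  rw [D1_last hN n, (hasG n x).fderiv]
  simp only [Dg, ContinuousLinearMap.coe_sum', Finset.sum_apply,
    ContinuousLinearMap.smul_apply]
  rw [Finset.sum_eq_single s₀ (fun t _ ht => by
      rw [proj_ebasis, if_neg (fun h => ht (cI_inj h))]; simp)
    (fun h => absurd (Finset.mem_univ s₀) h)]
  rw [proj_ebasis, if_pos rfl]
  simp [smul_eq_mul]

lemma hasD1c (t₀ : Fin (N-1)) (x : Eu N) :
    ∃ κ : ℝ, HasFDerivAt (fun y : Eu N => y (lastIdx N hN) * (Pf n t₀ y * df n t₀ y))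
      ((x (lastIdx N hN)) • (Pf n t₀ x • (κ • (EuclideanSpace.proj (cI t₀) : Eu N →L[ℝ] ℝ))
          + df n t₀ x • DP n t₀ x)
        + (Pf n t₀ x * df n t₀ x) • (EuclideanSpace.proj (lastIdx N hN) : Eu N →L[ℝ] ℝ)) x := by
  obtain ⟨κ, hd⟩ := hasd n t₀ x
  exact ⟨κ, ((EuclideanSpace.proj (lastIdx N hN) : Eu N →L[ℝ] ℝ).hasFDerivAt).mul
    ((hasP n t₀ x).mul hd)⟩

lemma pd2_last_cI (t₀ : Fin (N-1)) (x : Eu N) :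
    pd2 (ffun N hN n) (lastIdx N hN) (cI t₀) x = Pf n t₀ x * df n t₀ x := by
  unfold pd2
  rw [D1_cI hN n]
  obtain ⟨κ, h⟩ := hasD1c hN n t₀ x
  rw [h.fderiv]
  simp only [ContinuousLinearMap.add_apply, ContinuousLinearMap.smul_apply,
    DP, ContinuousLinearMap.coe_sum', Finset.sum_apply, proj_ebasis]
  rw [if_neg (cI_ne_last hN t₀)]
  rw [Finset.sum_eq_zero (fun t _ => by
    rw [if_neg (cI_ne_last hN t)]; simp)]
  simp

lemma pd2_cI_cI {s₀ t₀ : Fin (N-1)} (hst : s₀ ≠ t₀) (x : Eu N) :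
    pd2 (ffun N hN n) (cI s₀) (cI t₀) x
      = x (lastIdx N hN) *
        ((∏ r ∈ (Finset.univ.erase t₀).erase s₀, Sf n r x) * df n s₀ x * df n t₀ x) := by
  unfold pd2
  rw [D1_cI hN n]
  obtain ⟨κ, h⟩ := hasD1c hN n t₀ x
  rw [h.fderiv]
  simp only [ContinuousLinearMap.add_apply, ContinuousLinearMap.smul_apply,
    DP, ContinuousLinearMap.coe_sum', Finset.sum_apply, proj_ebasis]
  rw [if_neg (show cI t₀ = cI s₀ → False from fun hh => hst (cI_inj hh).symm),
    if_neg (Ne.symm (cI_ne_last hN s₀))]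
  rw [Finset.sum_eq_single s₀ (fun t _ ht => by
      rw [if_neg (show cI t = cI s₀ → False from fun hh => ht (cI_inj hh))]; simp)
    (fun h => absurd (Finset.mem_erase.mpr ⟨hst, Finset.mem_univ s₀⟩) h)]
  simp only [if_true, smul_eq_mul, smul_zero, mul_zero, add_zero, mul_one, zero_add]
  ring


lemma Sf_ne_zero {t : Fin (N-1)} {x : Eu N} (h : df n t x ≠ 0) : Sf n t x ≠ 0 :=
  fun h' => h (Sf_eq_zero_of_df n h')

lemma row_zero {s : Fin (N-1)} {x : Eu N} (hd : df n s x = 0)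
    (j : Fin N) (hj : j ≠ cI s) : pd2 (ffun N hN n) (cI s) j x = 0 := by
  rcases eq_last_or_cI hN j with h | ⟨t, rfl⟩
  · subst h; rw [pd2_cI_last hN n s x, hd, mul_zero]
  · have hts : s ≠ t := fun h => hj (by rw [h])
    rw [pd2_cI_cI hN n hts x, hd]
    ring

lemma row_prop_last {s : Fin (N-1)} {x : Eu N} (hd : df n s x ≠ 0)
    (j : Fin N) (hj1 : j ≠ cI s) (hj2 : j ≠ lastIdx N hN) :
    pd2 (ffun N hN n) (cI s) j x
      = (x (lastIdx N hN) * df n s x / Sf n s x) * pd2 (ffun N hN n) (lastIdx N hN) j x := by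
  have hS := Sf_ne_zero n hd
  rcases eq_last_or_cI hN j with h | ⟨t, rfl⟩
  · exact absurd h hj2
  have hts : s ≠ t := fun h => hj1 (by rw [h])
  rw [pd2_cI_cI hN n hts x, pd2_last_cI hN n t x]
  have hP : Pf n t x = Sf n s x * ∏ r ∈ (Finset.univ.erase t).erase s, Sf n r x := by
    rw [Pf, ← Finset.mul_prod_erase _ _ (Finset.mem_erase.mpr ⟨hts, Finset.mem_univ s⟩)]
  rw [hP]
  field_simp

lemma row_prop_cI {s₁ s₂ : Fin (N-1)} {x : Eu N} (h12 : s₁ ≠ s₂)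
    (hd1 : df n s₁ x ≠ 0) (hd2 : df n s₂ x ≠ 0)
    (j : Fin N) (hj1 : j ≠ cI s₁) (hj2 : j ≠ cI s₂) :
    pd2 (ffun N hN n) (cI s₁) j x
      = (Sf n s₂ x * df n s₁ x / (Sf n s₁ x * df n s₂ x))
          * pd2 (ffun N hN n) (cI s₂) j x := by
  have hS1 := Sf_ne_zero n hd1
  have hS2 := Sf_ne_zero n hd2
  rcases eq_last_or_cI hN j with h | ⟨t, rfl⟩
  · subst h
    rw [pd2_cI_last hN n s₁ x, pd2_cI_last hN n s₂ x]
    have h1 : Pf n s₁ x = Sf n s₂ x * ∏ r ∈ (Finset.univ.erase s₁).erase s₂, Sf n r x := by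
      rw [Pf, ← Finset.mul_prod_erase _ _
        (Finset.mem_erase.mpr ⟨(Ne.symm h12), Finset.mem_univ s₂⟩)]
    have h2 : Pf n s₂ x = Sf n s₁ x * ∏ r ∈ (Finset.univ.erase s₁).erase s₂, Sf n r x := by
      rw [Pf, Finset.erase_right_comm (a := s₁) (b := s₂), ← Finset.mul_prod_erase _ _
        (Finset.mem_erase.mpr ⟨h12, Finset.mem_univ s₁⟩)]
    rw [h1, h2]
    field_simp
  have ht1 : s₁ ≠ t := fun h => hj1 (by rw [h])
  have ht2 : s₂ ≠ t := fun h => hj2 (by rw [h])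
  rw [pd2_cI_cI hN n ht1 x, pd2_cI_cI hN n ht2 x]
  have h1 : (∏ r ∈ (Finset.univ.erase t).erase s₁, Sf n r x)
      = Sf n s₂ x * ∏ r ∈ ((Finset.univ.erase t).erase s₁).erase s₂, Sf n r x := by
    rw [← Finset.mul_prod_erase _ _
      (Finset.mem_erase.mpr ⟨Ne.symm h12, Finset.mem_erase.mpr ⟨ht2, Finset.mem_univ s₂⟩⟩)]
  have h2 : (∏ r ∈ (Finset.univ.erase t).erase s₂, Sf n r x)
      = Sf n s₁ x * ∏ r ∈ ((Finset.univ.erase t).erase s₁).erase s₂, Sf n r x := by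
    rw [Finset.erase_right_comm (a := s₁) (b := s₂), ← Finset.mul_prod_erase _ _
      (Finset.mem_erase.mpr ⟨h12, Finset.mem_erase.mpr ⟨ht1, Finset.mem_univ s₁⟩⟩)]
  rw [h1, h2]
  field_simp


lemma key (x : Eu N) {i₁ i₂ : Fin N} (h12 : i₁ ≠ i₂) :
    (∀ j, j ≠ i₁ → pd2 (ffun N hN n) i₁ j x = 0) ∨
    (∀ j, j ≠ i₂ → pd2 (ffun N hN n) i₂ j x = 0) ∨
    (∃ r, ∀ j, j ≠ i₁ → j ≠ i₂ → pd2 (ffun N hN n) i₁ j x = r * pd2 (ffun N hN n) i₂ j x) ∨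
    (∃ r, ∀ j, j ≠ i₁ → j ≠ i₂ → pd2 (ffun N hN n) i₂ j x = r * pd2 (ffun N hN n) i₁ j x) := by
  rcases eq_last_or_cI hN i₁ with h1 | ⟨s₁, rfl⟩
  · rcases eq_last_or_cI hN i₂ with h2 | ⟨s₂, rfl⟩
    · exact absurd (h1.trans h2.symm) h12
    subst h1
    by_cases hd : df n s₂ x = 0
    · exact Or.inr (Or.inl (fun j hj => row_zero hN n hd j hj))
    · exact Or.inr (Or.inr (Or.inr ⟨_, fun j hj1 hj2 =>
        row_prop_last hN n hd j hj2 hj1⟩))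
  · rcases eq_last_or_cI hN i₂ with h2 | ⟨s₂, rfl⟩
    · subst h2
      by_cases hd : df n s₁ x = 0
      · exact Or.inl (fun j hj => row_zero hN n hd j hj)
      · exact Or.inr (Or.inr (Or.inl ⟨_, fun j hj1 hj2 =>
          row_prop_last hN n hd j hj1 hj2⟩))
    · have hss : s₁ ≠ s₂ := fun h => h12 (by rw [h])
      by_cases hd1 : df n s₁ x = 0
      · exact Or.inl (fun j hj => row_zero hN n hd1 j hj)
      by_cases hd2 : df n s₂ x = 0
      · exact Or.inr (Or.inl (fun j hj => row_zero hN n hd2 j hj))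
      · exact Or.inr (Or.inr (Or.inl ⟨_, fun j hj1 hj2 =>
          row_prop_cI hN n hss hd1 hd2 j hj1 hj2⟩))

lemma det_prop {m : ℕ} (M : Matrix (Fin m) (Fin m) ℝ) {a₁ a₂ : Fin m} (ha : a₁ ≠ a₂)
    (r : ℝ) (h : ∀ b, M a₁ b = r * M a₂ b) : M.det = 0 := by
  have hM : M = Matrix.updateRow M a₁ (r • M a₂) := by
    ext i b
    rcases eq_or_ne i a₁ with rfl | hi
    · simp [Matrix.updateRow_self, h b, smul_eq_mul]
    · simp [Matrix.updateRow_ne hi]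
  rw [hM, Matrix.det_updateRow_smul]
  have : (Matrix.updateRow M a₁ (M a₂)).det = 0 := by
    apply Matrix.det_zero_of_row_eq ha
    rw [Matrix.updateRow_self, Matrix.updateRow_ne (Ne.symm ha)]
  rw [this, mul_zero]

end Aux

/-- Lemma 5.3: if `#(I ∩ J) ≤ m − 2` then the submatrix determinant
`det(H_𝓵^{(I,J)})` vanishes identically. -/
theorem stmt15 (N : ℕ) (hN : 3 ≤ N) (k : ℕ) (hk : 2 ≤ k)
    (l : Fin N → ℕ) (hlmem : ∀ i, l i ∈ Finset.Icc 1 k) (hne : ¬ ∀ i j, l i = l j)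
    (lstar : ℕ) (hlstar : lstar = Finset.univ.sup l)
    (I : Finset (Fin N)) (hI : I = Finset.filter (fun i => l i = lstar) Finset.univ)
    (m : ℕ) (hm : I.card = m)
    (J : Finset (Fin N)) (hJ : J.card = m)
    (hIJ : ((I ∩ J).card : ℤ) ≤ (m : ℤ) - 2)
    (x : Eu N) :
    (Matrix.of fun (a b : Fin m) =>
      pd2 (ffun N (by omega) ((nseq N k (l ((I.orderIsoOfFin hm a) : Fin N)) : ℝ)))
        ((I.orderIsoOfFin hm a) : Fin N) ((J.orderIsoOfFin hJ b) : Fin N) x).det = 0 := by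
  have hN0 : 0 < N := by omega
  have hIl : ∀ i ∈ I, l i = lstar := by
    intro i hi
    rw [hI] at hi
    exact (Finset.mem_filter.mp hi).2
  have hconst : ∀ a : Fin m, l ((I.orderIsoOfFin hm a : Fin N)) = lstar := fun a =>
    hIl _ (I.orderIsoOfFin hm a).2
  -- two distinct elements of I \ J
  have hcard : 1 < (I \ J).card := by
    have h1 := Finset.card_sdiff_add_card_inter I J
    have h2 : (I ∩ J).card ≤ m := by
      have := Finset.card_le_card (Finset.inter_subset_left (s₁ := I) (s₂ := J))
      omega
    omega
  obtain ⟨i₁, hi₁, i₂, hi₂, h12⟩ := Finset.one_lt_card.mp hcard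
  have hi₁I : i₁ ∈ I := (Finset.mem_sdiff.mp hi₁).1
  have hi₂I : i₂ ∈ I := (Finset.mem_sdiff.mp hi₂).1
  have hi₁J : i₁ ∉ J := (Finset.mem_sdiff.mp hi₁).2
  have hi₂J : i₂ ∉ J := (Finset.mem_sdiff.mp hi₂).2
  set e := I.orderIsoOfFin hm with he
  set a₁ : Fin m := e.symm ⟨i₁, hi₁I⟩ with ha₁
  set a₂ : Fin m := e.symm ⟨i₂, hi₂I⟩ with ha₂
  have hea₁ : (e a₁ : Fin N) = i₁ := by rw [ha₁, OrderIso.apply_symm_apply]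
  have hea₂ : (e a₂ : Fin N) = i₂ := by rw [ha₂, OrderIso.apply_symm_apply]
  have ha12 : a₁ ≠ a₂ := by
    intro h
    apply h12
    rw [← hea₁, ← hea₂, h]
  have hγ : ∀ b : Fin m, ((J.orderIsoOfFin hJ b : Fin N)) ∈ J := fun b =>
    (J.orderIsoOfFin hJ b).2
  set nst : ℝ := ((nseq N k lstar : ℕ) : ℝ) with hnst
  have hMeq : (Matrix.of fun (a b : Fin m) =>
      pd2 (ffun N (by omega) ((nseq N k (l ((I.orderIsoOfFin hm a) : Fin N)) : ℝ)))
        ((I.orderIsoOfFin hm a) : Fin N) ((J.orderIsoOfFin hJ b) : Fin N) x)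
      = (Matrix.of fun (a b : Fin m) =>
      pd2 (ffun N hN0 nst) ((e a : Fin N)) ((J.orderIsoOfFin hJ b : Fin N)) x) := by
    ext a b
    simp only [Matrix.of_apply, hconst a, he, hnst]
    rw [show l ((I.orderIsoOfFin hm a) : Fin N) = lstar from hconst a]
  rw [hMeq]
  rcases Aux.key hN0 nst x (show i₁ ≠ i₂ from h12) with hz | hz | ⟨r, hr⟩ | ⟨r, hr⟩
  · apply Matrix.det_eq_zero_of_row_eq_zero a₁
    intro b
    simp only [Matrix.of_apply, hea₁]
    exact hz _ (fun h => hi₁J (h ▸ hγ b))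
  · apply Matrix.det_eq_zero_of_row_eq_zero a₂
    intro b
    simp only [Matrix.of_apply, hea₂]
    exact hz _ (fun h => hi₂J (h ▸ hγ b))
  · apply Aux.det_prop _ ha12 r
    intro b
    simp only [Matrix.of_apply, hea₁, hea₂]
    exact hr _ (fun h => hi₁J (h ▸ hγ b)) (fun h => hi₂J (h ▸ hγ b))
  · apply Aux.det_prop _ (Ne.symm ha12) r
    intro b
    simp only [Matrix.of_apply, hea₁, hea₂]
    exact hr _ (fun h => hi₁J (h ▸ hγ b)) (fun h => hi₂J (h ▸ hγ b))
end
end
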